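/- arXiv:1501.07155 — 5 statements merged into one kernel-verified Lean document; each statement's English description precedes it below -/
import Mathlib

section
/- Let R = max_{x ∈ cl(U)} dist(x, ∂U) be the radius of the largest ball inscribed in U. Then sup over Borel probability measures μ on cl(U) of W_s(μ, P(∂U)) equals R^s. (Since Λ^D_{s,∞} := lim_{p→∞}(λ^D_{s,p})^{1/p} = 1/R^s, this says 1/Λ^D_{s,∞} = sup_{μ ∈ P(cl(U))} W_s(μ, P(∂U)).) -/
open MeasureTheory Set Filter Topology ENNReal

private abbrev EucX (n : ℕ) := EuclideanSpace ℝ (Fin n)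

/-- The optimal transport cost between probability measures `μ` and `ν` on `ℝⁿ`
for the cost function `c(x,y) = |x-y|^s`: the infimum over all couplings `π`
(probability measures with first marginal `μ` and second marginal `ν`) of
`∬ |x-y|^s dπ(x,y)`. -/
noncomputable def Ws (n : ℕ) (s : ℝ)
    (μ ν : Measure (EuclideanSpace ℝ (Fin n))) : ℝ :=
  sInf {c : ℝ | ∃ π : Measure (EuclideanSpace ℝ (Fin n) × EuclideanSpace ℝ (Fin n)),
    IsProbabilityMeasure π ∧ π.map Prod.fst = μ ∧ π.map Prod.snd = ν ∧
    c = ∫ q, dist q.1 q.2 ^ s ∂π}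

/-- Theorem 1.1 (Dirichlet case): if `R = max_{x ∈ cl U} dist(x, ∂U)` is the radius of the
largest inscribed ball, then
`sup_{μ ∈ P(cl U)} W_s(μ, P(∂U)) = R^s  ( = 1/Λ^D_{s,∞} )`. -/
theorem sup_transport_dist_to_boundary_eq_inradius_rpow
    {n : ℕ} (hn : 1 ≤ n) (U : Set (EuclideanSpace ℝ (Fin n)))
    (hUo : IsOpen U) (hUne : U.Nonempty) (hUb : Bornology.IsBounded U)
    (s : ℝ) (hs : s ∈ Set.Ioo (0 : ℝ) 1)
    (R : ℝ) (hR : IsGreatest ((fun x => Metric.infDist x (frontier U)) '' closure U) R) :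
    sSup {w : ℝ | ∃ μ : Measure (EuclideanSpace ℝ (Fin n)),
        IsProbabilityMeasure μ ∧ μ ((closure U)ᶜ) = 0 ∧
        w = sInf {c : ℝ | ∃ ν : Measure (EuclideanSpace ℝ (Fin n)),
          IsProbabilityMeasure ν ∧ ν ((frontier U)ᶜ) = 0 ∧ c = Ws n s μ ν}}
      = R ^ s := by
  obtain ⟨hs0, hs1⟩ := hs
  haveI : Nonempty (Fin n) := ⟨⟨0, hn⟩⟩
  set F := frontier U with hF
  have hFclosed : IsClosed F := isClosed_frontier
  have hKcl : IsClosed (closure U) := isClosed_closure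
  have hKb : Bornology.IsBounded (closure U) := hUb.closure
  have hKc : IsCompact (closure U) := Metric.isCompact_of_isClosed_isBounded hKcl hKb
  have hFc : IsCompact F := hKc.of_isClosed_subset hFclosed frontier_subset_closure
  have hFne : F.Nonempty := by
    by_contra h
    have hcl : IsClopen U := isClopen_iff_frontier_eq_empty.mpr
      (not_nonempty_iff_eq_empty.mp h)
    rcases isClopen_iff.mp hcl with h1 | h1
    · exact hUne.ne_empty h1
    · exact NormedSpace.unbounded_univ ℝ (EucX n) (h1 ▸ hUb)
  obtain ⟨x0, hx0K, hx0R⟩ : ∃ x0 ∈ closure U, Metric.infDist x0 F = R := by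
    obtain ⟨x0, hx0, h⟩ := hR.1; exact ⟨x0, hx0, h⟩
  have hR0 : 0 ≤ R := hx0R ▸ Metric.infDist_nonneg
  have hRub : ∀ x ∈ closure U, Metric.infDist x F ≤ R := fun x hx => hR.2 ⟨x, hx, rfl⟩
  -- the cost sets are bounded below by 0
  have hC_nonneg : ∀ (μ ν : Measure (EucX n)) (c : ℝ),
      (∃ π : Measure ((EucX n) × (EucX n)), IsProbabilityMeasure π ∧ π.map Prod.fst = μ ∧
        π.map Prod.snd = ν ∧ c = ∫ q, dist q.1 q.2 ^ s ∂π) → 0 ≤ c := by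
    rintro μ ν c ⟨π, hπ, -, -, rfl⟩
    exact integral_nonneg fun q => Real.rpow_nonneg dist_nonneg s
  have hWs_nonneg : ∀ μ ν : Measure (EucX n), 0 ≤ Ws n s μ ν := fun μ ν =>
    Real.sInf_nonneg fun c hc => hC_nonneg μ ν c hc
  have hfcont : Continuous fun q : (EucX n) × (EucX n) => dist q.1 q.2 ^ s :=
    (continuous_fst.dist continuous_snd).rpow_const fun q => Or.inr hs0.le
  -- bound on distances to the (bounded) boundary
  obtain ⟨M, hM0, hM⟩ : ∃ M, 0 ≤ M ∧ ∀ x ∈ closure U, ∀ y ∈ F, dist x y ≤ M := by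
    obtain ⟨r, hr⟩ := hKb.subset_closedBall x0
    refine ⟨2 * max r 0, by positivity, fun x hx y hy => ?_⟩
    have h1 : dist x x0 ≤ max r 0 := le_trans (hr hx) (le_max_left _ _)
    have h2 : dist y x0 ≤ max r 0 :=
      le_trans (hr (frontier_subset_closure hy)) (le_max_left _ _)
    calc dist x y ≤ dist x x0 + dist x0 y := dist_triangle _ _ _
      _ ≤ max r 0 + max r 0 := add_le_add h1 (by rwa [dist_comm])
      _ = 2 * max r 0 := by ring
  -- Lemma II : lower bound for transports of the dirac at x0
  have hWge : ∀ ν : Measure (EucX n), IsProbabilityMeasure ν → ν Fᶜ = 0 →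
      R ^ s ≤ Ws n s (Measure.dirac x0) ν := by
    intro ν hν hνF
    haveI := hν
    apply le_csInf
    · refine ⟨∫ q, dist q.1 q.2 ^ s ∂((Measure.dirac x0).prod ν),
        (Measure.dirac x0).prod ν, inferInstance, ?_, ?_, rfl⟩
      · simp [Measure.map_fst_prod]
      · simp [Measure.map_snd_prod]
    · rintro c ⟨π, hπ, hfst, hsnd, rfl⟩
      haveI := hπ
      have h1 : ∀ᵐ q : (EucX n) × (EucX n) ∂π, q.1 = x0 := by
        rw [ae_iff]
        have : {q : (EucX n) × (EucX n) | ¬ q.1 = x0} = Prod.fst ⁻¹' ({x0}ᶜ) := rfl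
        rw [this, ← Measure.map_apply measurable_fst (measurableSet_singleton x0).compl,
          hfst]
        simp [Measure.dirac_apply' _ (measurableSet_singleton x0).compl]
      have h2 : ∀ᵐ q : (EucX n) × (EucX n) ∂π, q.2 ∈ F := by
        rw [ae_iff]
        have : {q : (EucX n) × (EucX n) | ¬ q.2 ∈ F} = Prod.snd ⁻¹' (Fᶜ) := rfl
        rw [this, ← Measure.map_apply measurable_snd hFclosed.measurableSet.compl, hsnd]
        exact hνF
      have hae := h1.and h2
      have hint : Integrable (fun q : (EucX n) × (EucX n) => dist q.1 q.2 ^ s) π := by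
        refine Integrable.mono' (integrable_const (M ^ s))
          hfcont.aestronglyMeasurable ?_
        filter_upwards [hae] with q hq
        rw [Real.norm_of_nonneg (Real.rpow_nonneg dist_nonneg s)]
        exact Real.rpow_le_rpow dist_nonneg
          (hq.1 ▸ hM x0 hx0K q.2 hq.2) hs0.le
      calc R ^ s = ∫ _q : (EucX n) × (EucX n), R ^ s ∂π := by simp
        _ ≤ ∫ q : (EucX n) × (EucX n), dist q.1 q.2 ^ s ∂π := by
            refine integral_mono_ae (integrable_const _) hint ?_
            filter_upwards [hae] with q hq
            refine Real.rpow_le_rpow hR0 ?_ hs0.le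
            rw [← hx0R, hq.1]
            exact Metric.infDist_le_dist_of_mem hq.2
  -- Lemma III : the dirac-to-dirac cost
  obtain ⟨y0, hy0F, hy0d⟩ := hFc.exists_infDist_eq_dist hFne x0
  have hdist0 : dist x0 y0 = R := by rw [← hy0d, hx0R]
  have hy0Fc : (Measure.dirac y0) Fᶜ = 0 := by
    rw [Measure.dirac_apply' _ hFclosed.measurableSet.compl,
      Set.indicator_of_notMem (by simpa using hy0F)]
  have hWdd : Ws n s (Measure.dirac x0) (Measure.dirac y0) = R ^ s := by
    refine le_antisymm ?_ (hWge _ inferInstance hy0Fc)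
    refine csInf_le ⟨0, fun c hc => hC_nonneg _ _ c hc⟩ ?_
    refine ⟨Measure.dirac (x0, y0), inferInstance, ?_, ?_, ?_⟩
    · rw [Measure.map_dirac' measurable_fst]
    · rw [Measure.map_dirac' measurable_snd]
    · rw [integral_dirac]
      rw [hdist0]
  -- the inner inf for μ = dirac x0 equals R ^ s
  have hTub : sInf {c : ℝ | ∃ ν : Measure (EucX n),
      IsProbabilityMeasure ν ∧ ν Fᶜ = 0 ∧ c = Ws n s (Measure.dirac x0) ν} = R ^ s := by
    refine le_antisymm ?_ ?_
    · refine csInf_le ⟨0, ?_⟩ ?_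
      · rintro c ⟨ν, hν, hνF, rfl⟩; exact hWs_nonneg _ _
      · exact hWdd ▸ ⟨Measure.dirac y0, inferInstance, hy0Fc, rfl⟩
    · refine le_csInf ⟨_, Measure.dirac y0, inferInstance, hy0Fc, rfl⟩ ?_
      rintro c ⟨ν, hν, hνF, rfl⟩
      exact hWge ν hν hνF
  have hdiracK : (Measure.dirac x0) ((closure U)ᶜ) = 0 := by
    rw [Measure.dirac_apply' _ hKcl.measurableSet.compl,
      Set.indicator_of_notMem (by simpa using hx0K)]
  -- Part B : every element of the sup set is ≤ (R+ε)^s for all ε > 0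
  have key : ∀ (μ : Measure (EucX n)), IsProbabilityMeasure μ → μ ((closure U)ᶜ) = 0 →
      ∀ ε : ℝ, 0 < ε → ∃ ν : Measure (EucX n), IsProbabilityMeasure ν ∧ ν Fᶜ = 0 ∧
        Ws n s μ ν ≤ (R + ε) ^ s := by
    intro μ hμ hμK ε hε
    haveI := hμ
    obtain ⟨t, htK, htfin, htcover⟩ :=
      hKc.elim_finite_subcover_image (fun x _ => Metric.isOpen_ball)
        (fun x hx => mem_iUnion₂.mpr ⟨x, hx, Metric.mem_ball_self hε⟩)
    classical
    set l : List (EucX n) := htfin.toFinset.toList with hl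
    set cpt : ℕ → (EucX n) := fun i => l.getD i x0 with hcpt
    have hcptK : ∀ i, cpt i ∈ closure U := by
      intro i
      by_cases h : i < l.length
      · have h1 : cpt i = l.get ⟨i, h⟩ := List.getD_eq_get l x0 ⟨i, h⟩
        have h2 : l.get ⟨i, h⟩ ∈ l := List.get_mem l _
        rw [h1]
        exact htK (htfin.mem_toFinset.mp (Finset.mem_toList.mp h2))
      · have : cpt i = x0 := List.getD_eq_default l x0 (le_of_not_gt h)
        rw [this]; exact hx0K
    set fi : ℕ → Set (EucX n) := fun i => closure U ∩ Metric.ball (cpt i) ε with hfi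
    set E : ℕ → Set (EucX n) := disjointed fi with hE
    have hEm : ∀ i, MeasurableSet (E i) :=
      MeasurableSet.disjointed fun i => hKcl.measurableSet.inter measurableSet_ball
    have hEd : Pairwise (Function.onFun Disjoint E) := disjoint_disjointed fi
    have hEfi : ∀ i, E i ⊆ fi i := disjointed_subset fi
    have hKsub : closure U ⊆ ⋃ i, E i := by
      rw [hE, iUnion_disjointed]
      intro x hx
      obtain ⟨p, hp, hxp⟩ := mem_iUnion₂.mp (htcover hx)
      have hpl : p ∈ l := by
        rw [hl, Finset.mem_toList, Set.Finite.mem_toFinset]; exact hp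
      obtain ⟨j, hj⟩ := List.mem_iff_get.mp hpl
      refine mem_iUnion.mpr ⟨j, hx, ?_⟩
      have : cpt j = p := by
        simp only [hcpt]
        rw [List.getD_eq_getElem l x0 j.isLt]
        simpa using hj
      rw [this]; exact hxp
    choose y hyF hyd using fun i => hFc.exists_infDist_eq_dist hFne (cpt i)
    have hydR : ∀ i, dist (cpt i) (y i) ≤ R := fun i => (hyd i) ▸ hRub _ (hcptK i)
    have hgm : ∀ i, Measurable fun x : (EucX n) => (x, y i) :=
      fun i => measurable_id.prodMk measurable_const
    set π : Measure ((EucX n) × (EucX n)) :=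
      Measure.sum (fun i => (μ.restrict (E i)).map (fun x => (x, y i))) with hπdef
    have hrestr : μ.restrict (⋃ i, E i) = μ := by
      refine Measure.restrict_eq_self_of_ae_mem ?_
      rw [ae_iff]
      exact measure_mono_null (fun x hx => fun hxK => hx (hKsub hxK)) hμK
    have hsum_restrict : Measure.sum (fun i => μ.restrict (E i)) = μ := by
      rw [← Measure.restrict_iUnion hEd hEm, hrestr]
    have hfst : π.map Prod.fst = μ := by
      rw [hπdef, Measure.map_sum measurable_fst.aemeasurable]
      have h : ∀ i, ((μ.restrict (E i)).map (fun x : (EucX n) => (x, y i))).map Prod.fst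
          = μ.restrict (E i) := by
        intro i
        rw [Measure.map_map measurable_fst (hgm i)]
        have hcomp : (Prod.fst ∘ fun x : (EucX n) => (x, y i)) = id := rfl
        rw [hcomp, Measure.map_id]
      simp_rw [h]
      exact hsum_restrict
    have hπprob : IsProbabilityMeasure π := by
      constructor
      calc π Set.univ = π (Prod.fst ⁻¹' Set.univ) := by rw [preimage_univ]
        _ = (π.map Prod.fst) Set.univ :=
            (Measure.map_apply measurable_fst MeasurableSet.univ).symm
        _ = μ Set.univ := by rw [hfst]
        _ = 1 := measure_univ
    haveI := hπprob
    set ν : Measure (EucX n) := π.map Prod.snd with hνdef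
    have hνprob : IsProbabilityMeasure ν :=
      Measure.isProbabilityMeasure_map measurable_snd.aemeasurable
    have hνF : ν Fᶜ = 0 := by
      rw [hνdef, Measure.map_apply measurable_snd hFclosed.measurableSet.compl, hπdef,
        Measure.sum_apply _ (measurable_snd hFclosed.measurableSet.compl)]
      have h : ∀ i, ((μ.restrict (E i)).map (fun x : (EucX n) => (x, y i)))
          (Prod.snd ⁻¹' Fᶜ) = 0 := by
        intro i
        rw [Measure.map_apply (hgm i) (measurable_snd hFclosed.measurableSet.compl)]
        have : (fun x : (EucX n) => (x, y i)) ⁻¹' (Prod.snd ⁻¹' Fᶜ) = ∅ := by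
          apply eq_empty_iff_forall_notMem.mpr
          intro x hx
          exact hx (hyF i)
        rw [this]
        exact measure_empty
      simp_rw [h]
      exact tsum_zero
    have haeb : ∀ᵐ q : (EucX n) × (EucX n) ∂π, dist q.1 q.2 ≤ R + ε := by
      rw [ae_iff]
      have hms : MeasurableSet {q : (EucX n) × (EucX n) | ¬ dist q.1 q.2 ≤ R + ε} := by
        simp only [not_le]
        exact measurableSet_lt measurable_const
          (continuous_fst.dist continuous_snd).measurable
      rw [hπdef, Measure.sum_apply _ hms]
      have h : ∀ i, ((μ.restrict (E i)).map (fun x : (EucX n) => (x, y i)))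
          {q : (EucX n) × (EucX n) | ¬ dist q.1 q.2 ≤ R + ε} = 0 := by
        intro i
        rw [Measure.map_apply (hgm i) hms, Measure.restrict_apply ((hgm i) hms)]
        have : (fun x : (EucX n) => (x, y i)) ⁻¹' {q : (EucX n) × (EucX n) | ¬ dist q.1 q.2 ≤ R + ε} ∩ E i
            = ∅ := by
          apply eq_empty_iff_forall_notMem.mpr
          rintro x ⟨hxbad, hxE⟩
          apply hxbad
          have hxf := hEfi i hxE
          calc dist x (y i) ≤ dist x (cpt i) + dist (cpt i) (y i) := dist_triangle _ _ _
            _ ≤ ε + R := add_le_add (le_of_lt (Metric.mem_ball.mp hxf.2)) (hydR i)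
            _ = R + ε := add_comm _ _
        rw [this]
        exact measure_empty
      simp_rw [h]
      exact tsum_zero
    have hRε0 : (0:ℝ) ≤ R + ε := by linarith
    have hint : Integrable (fun q : (EucX n) × (EucX n) => dist q.1 q.2 ^ s) π := by
      refine Integrable.mono' (integrable_const ((R + ε) ^ s))
        hfcont.aestronglyMeasurable ?_
      filter_upwards [haeb] with q hq
      rw [Real.norm_of_nonneg (Real.rpow_nonneg dist_nonneg s)]
      exact Real.rpow_le_rpow dist_nonneg hq hs0.le
    have hcost : ∫ q : (EucX n) × (EucX n), dist q.1 q.2 ^ s ∂π ≤ (R + ε) ^ s := by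
      calc ∫ q : (EucX n) × (EucX n), dist q.1 q.2 ^ s ∂π ≤ ∫ _q : (EucX n) × (EucX n), (R + ε) ^ s ∂π := by
            refine integral_mono_ae hint (integrable_const _) ?_
            filter_upwards [haeb] with q hq
            exact Real.rpow_le_rpow dist_nonneg hq hs0.le
        _ = (R + ε) ^ s := by simp
    refine ⟨ν, hνprob, hνF, ?_⟩
    refine le_trans (csInf_le ⟨0, fun c hc => hC_nonneg _ _ c hc⟩
      ⟨π, hπprob, hfst, rfl, rfl⟩) hcost
  -- every element of the sup set is ≤ R ^ s
  have hub : ∀ w ∈ {w : ℝ | ∃ μ : Measure (EucX n),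
      IsProbabilityMeasure μ ∧ μ ((closure U)ᶜ) = 0 ∧
      w = sInf {c : ℝ | ∃ ν : Measure (EucX n),
        IsProbabilityMeasure ν ∧ ν Fᶜ = 0 ∧ c = Ws n s μ ν}}, w ≤ R ^ s := by
    rintro w ⟨μ, hμ, hμK, rfl⟩
    have hbd : ∀ ε : ℝ, 0 < ε →
        sInf {c : ℝ | ∃ ν : Measure (EucX n),
          IsProbabilityMeasure ν ∧ ν Fᶜ = 0 ∧ c = Ws n s μ ν} ≤ (R + ε) ^ s := by
      intro ε hε
      obtain ⟨ν, hν, hνF, hWle⟩ := key μ hμ hμK ε hε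
      refine le_trans (csInf_le ⟨0, ?_⟩ ⟨ν, hν, hνF, rfl⟩) hWle
      rintro c ⟨ν', hν', hν'F, rfl⟩
      exact hWs_nonneg _ _
    have htend : Tendsto (fun ε : ℝ => (R + ε) ^ s) (𝓝[>] 0) (𝓝 (R ^ s)) := by
      have h1 : Tendsto (fun ε : ℝ => R + ε) (𝓝[>] 0) (𝓝 R) := by
        have h0 : Tendsto (fun ε : ℝ => R + ε) (𝓝 0) (𝓝 (R + 0)) :=
          (continuous_const.add continuous_id).tendsto 0
        rw [add_zero] at h0
        exact h0.mono_left nhdsWithin_le_nhds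
      exact ((Real.continuousAt_rpow_const R s (Or.inr hs0.le)).tendsto).comp h1
    refine ge_of_tendsto htend ?_
    filter_upwards [self_mem_nhdsWithin] with ε hε
    exact hbd ε hε
  refine le_antisymm ?_ ?_
  · refine csSup_le ⟨R ^ s, Measure.dirac x0, inferInstance, hdiracK, hTub.symm⟩ hub
  · exact le_csSup ⟨R ^ s, hub⟩ ⟨Measure.dirac x0, inferInstance, hdiracK, hTub.symm⟩
end

section
/- The maximum of W_s(σ⁺, σ⁻) over all finite signed Borel measures σ on cl(U) whose Jordan decomposition σ = σ⁺ − σ⁻ satisfies σ⁺(cl(U)) = σ⁻(cl(U)) = 1 exists and equals (diam_d(U))^s. (Since Λ^N_{s,∞} := lim_{p→∞}(λ^N_{s,p})^{1/p} = 2/(diam_d(U))^s, this says 2/Λ^N_{s,∞} equals this maximum.) -/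
open MeasureTheory Set Filter Topology ENNReal

/-- The optimal transport cost between probability measures `μ` and `ν` on `ℝⁿ`
for the cost function `c(x,y) = d(x,y)^s`, where `d` is a given distance:
the infimum over all couplings `π` of `∬ d(x,y)^s dπ(x,y)`. -/
noncomputable def Wsd (n : ℕ) (d : EuclideanSpace ℝ (Fin n) → EuclideanSpace ℝ (Fin n) → ℝ)
    (s : ℝ) (μ ν : Measure (EuclideanSpace ℝ (Fin n))) : ℝ :=
  sInf {c : ℝ | ∃ π : Measure (EuclideanSpace ℝ (Fin n) × EuclideanSpace ℝ (Fin n)),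
    IsProbabilityMeasure π ∧ π.map Prod.fst = μ ∧ π.map Prod.snd = ν ∧
    c = ∫ q, d q.1 q.2 ^ s ∂π}

/-- Theorem 1.2 (Neumann case): the maximum of `W_s(σ⁺, σ⁻)` over all finite signed Borel
measures `σ` supported on `cl U` whose Jordan decomposition `σ = σ⁺ - σ⁻` satisfies
`σ⁺(cl U) = σ⁻(cl U) = 1` exists and equals `(diam_d U)^s  ( = 2/Λ^N_{s,∞} )`. -/
theorem max_transport_jordan_decomposition_eq_diam_rpow
    {n : ℕ} (hn : 1 ≤ n) (U : Set (EuclideanSpace ℝ (Fin n)))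
    (hUo : IsOpen U) (hUne : U.Nonempty) (hUb : Bornology.IsBounded U)
    (s : ℝ) (hs : s ∈ Set.Ioo (0 : ℝ) 1)
    (d : EuclideanSpace ℝ (Fin n) → EuclideanSpace ℝ (Fin n) → ℝ)
    (hdsymm : ∀ x y, d x y = d y x)
    (hdtri : ∀ x y z, d x z ≤ d x y + d y z)
    (c₁ c₂ : ℝ) (hc₁ : 0 < c₁) (hc₂ : 0 < c₂)
    (hdl : ∀ x y, c₁ * dist x y ≤ d x y) (hdu : ∀ x y, d x y ≤ c₂ * dist x y)
    (D : ℝ) (hD : IsGreatest {r : ℝ | ∃ x ∈ closure U, ∃ y ∈ closure U, r = d x y} D) :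
    IsGreatest {w : ℝ | ∃ σ : SignedMeasure (EuclideanSpace ℝ (Fin n)),
        σ.totalVariation ((closure U)ᶜ) = 0 ∧
        σ.toJordanDecomposition.posPart (closure U) = 1 ∧
        σ.toJordanDecomposition.negPart (closure U) = 1 ∧
        w = Wsd n d s σ.toJordanDecomposition.posPart σ.toJordanDecomposition.negPart}
      (D ^ s) := by
  obtain ⟨hs0, hs1⟩ := hs
  obtain ⟨x, hx, y, hy, hxy⟩ := hD.1
  have hd_nonneg : ∀ a b, 0 ≤ d a b := fun a b =>
    le_trans (by positivity) (hdl a b)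
  have hdxx : ∀ a, d a a = 0 := fun a =>
    le_antisymm (by simpa using hdu a a) (hd_nonneg a a)
  have hclm : MeasurableSet (closure U) := isClosed_closure.measurableSet
  -- D > 0
  have hDpos : 0 < D := by
    obtain ⟨u, hu⟩ := hUne
    obtain ⟨ε, hε, hball⟩ := Metric.isOpen_iff.mp hUo u hu
    haveI : NeZero n := ⟨by omega⟩
    obtain ⟨w, hw⟩ := exists_ne (0 : EuclideanSpace ℝ (Fin n))
    have hwn : 0 < ‖w‖ := norm_pos_iff.mpr hw
    set v := u + (ε / (2 * ‖w‖)) • w with hv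
    have hdistvu : dist v u = ε / 2 := by
      rw [dist_eq_norm]
      simp only [hv, add_sub_cancel_left]
      rw [norm_smul, Real.norm_eq_abs, abs_of_pos (by positivity)]
      field_simp
    have hvU : v ∈ U := hball (by rw [Metric.mem_ball, hdistvu]; linarith)
    have hle : c₁ * dist v u ≤ D := le_trans (hdl v u)
      (hD.2 ⟨v, subset_closure hvU, u, subset_closure hu, rfl⟩)
    rw [hdistvu] at hle
    nlinarith
  have hxney : x ≠ y := by
    intro h
    rw [hxy, h, hdxx] at hDpos
    exact lt_irrefl _ hDpos
  constructor
  · -- membership: the signed measure δ_x - δ_y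
    refine ⟨(JordanDecomposition.mk (Measure.dirac x) (Measure.dirac y)
      ⟨{x}ᶜ, (measurableSet_singleton x).compl,
        by simp, by simp [Measure.dirac_apply, hxney.symm]⟩).toSignedMeasure, ?_, ?_, ?_, ?_⟩
    · rw [SignedMeasure.totalVariation,
        MeasureTheory.JordanDecomposition.toJordanDecomposition_toSignedMeasure]
      simp only [Measure.add_apply]
      rw [Measure.dirac_apply' _ hclm.compl, Measure.dirac_apply' _ hclm.compl]
      simp [hx, hy]
    · rw [MeasureTheory.JordanDecomposition.toJordanDecomposition_toSignedMeasure]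
      exact Measure.dirac_apply_of_mem hx
    · rw [MeasureTheory.JordanDecomposition.toJordanDecomposition_toSignedMeasure]
      exact Measure.dirac_apply_of_mem hy
    · rw [MeasureTheory.JordanDecomposition.toJordanDecomposition_toSignedMeasure]
      show D ^ s = Wsd n d s (Measure.dirac x) (Measure.dirac y)
      have hall : ∀ c ∈ {c : ℝ | ∃ π : Measure (EuclideanSpace ℝ (Fin n) × EuclideanSpace ℝ (Fin n)),
          IsProbabilityMeasure π ∧ π.map Prod.fst = Measure.dirac x ∧
          π.map Prod.snd = Measure.dirac y ∧ c = ∫ q, d q.1 q.2 ^ s ∂π}, c = D ^ s := by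
        rintro c ⟨π, hπ, hf, hg, rfl⟩
        have h1 : π (Prod.fst ⁻¹' ({x}ᶜ)) = 0 := by
          rw [← Measure.map_apply measurable_fst (measurableSet_singleton x).compl, hf]
          simp
        have h2 : π (Prod.snd ⁻¹' ({y}ᶜ)) = 0 := by
          rw [← Measure.map_apply measurable_snd (measurableSet_singleton y).compl, hg]
          simp
        have h3 : π ({((x : EuclideanSpace ℝ (Fin n)), (y : EuclideanSpace ℝ (Fin n)))}ᶜ) = 0 := by
          refine measure_mono_null ?_ (measure_union_null h1 h2)
          intro q hq
          simp only [mem_compl_iff, mem_singleton_iff] at hq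
          simp only [mem_union, mem_preimage, mem_compl_iff, mem_singleton_iff]
          rcases eq_or_ne q.1 x with h1 | h1
          · rcases eq_or_ne q.2 y with h2 | h2
            · exact absurd (Prod.ext h1 h2) hq
            · exact Or.inr h2
          · exact Or.inl h1
        have hae : ∀ᵐ q ∂π, q = ((x : EuclideanSpace ℝ (Fin n)), y) := by
          rw [ae_iff]
          convert h3 using 2
          exact rfl
        have : (fun q : EuclideanSpace ℝ (Fin n) × EuclideanSpace ℝ (Fin n) => d q.1 q.2 ^ s)
            =ᵐ[π] fun _ => D ^ s := by
          filter_upwards [hae] with q hq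
          rw [hq, hxy]
        rw [integral_congr_ae this, integral_const]
        simp [hπ.measure_univ]
      have hmem : (D ^ s) ∈ {c : ℝ | ∃ π : Measure (EuclideanSpace ℝ (Fin n) × EuclideanSpace ℝ (Fin n)),
          IsProbabilityMeasure π ∧ π.map Prod.fst = Measure.dirac x ∧
          π.map Prod.snd = Measure.dirac y ∧ c = ∫ q, d q.1 q.2 ^ s ∂π} := by
        refine ⟨Measure.dirac (x, y), inferInstance,
          by rw [Measure.map_dirac' measurable_fst],
          by rw [Measure.map_dirac' measurable_snd], ?_⟩
        rw [integral_dirac, hxy]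
      have hset : {c : ℝ | ∃ π : Measure (EuclideanSpace ℝ (Fin n) × EuclideanSpace ℝ (Fin n)),
          IsProbabilityMeasure π ∧ π.map Prod.fst = Measure.dirac x ∧
          π.map Prod.snd = Measure.dirac y ∧ c = ∫ q, d q.1 q.2 ^ s ∂π} = {D ^ s} :=
        Set.eq_singleton_iff_unique_mem.mpr ⟨hmem, hall⟩
      rw [Wsd, hset, csInf_singleton]
  · -- upper bound
    rintro w ⟨σ, htv, hp, hq, rfl⟩
    set μ := σ.toJordanDecomposition.posPart with hμ
    set ν := σ.toJordanDecomposition.negPart with hν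
    have htv' : μ ((closure U)ᶜ) = 0 ∧ ν ((closure U)ᶜ) = 0 := by
      rw [SignedMeasure.totalVariation, Measure.add_apply] at htv
      exact add_eq_zero.mp htv
    haveI : IsProbabilityMeasure μ :=
      ⟨by rw [← measure_add_measure_compl hclm, hp, htv'.1, add_zero]⟩
    haveI : IsProbabilityMeasure ν :=
      ⟨by rw [← measure_add_measure_compl hclm, hq, htv'.2, add_zero]⟩
    have h0 : (μ.prod ν) ((closure U ×ˢ closure U)ᶜ) = 0 := by
      have hsub : (closure U ×ˢ closure U)ᶜ ⊆
          ((closure U)ᶜ ×ˢ (univ : Set (EuclideanSpace ℝ (Fin n)))) ∪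
          ((univ : Set (EuclideanSpace ℝ (Fin n))) ×ˢ (closure U)ᶜ) := by
        intro q hq
        simp only [mem_compl_iff, mem_prod, mem_union, mem_univ, and_true, true_and] at hq ⊢
        tauto
      refine measure_mono_null hsub (measure_union_null ?_ ?_)
      · rw [Measure.prod_prod, htv'.1, zero_mul]
      · rw [Measure.prod_prod, htv'.2, mul_zero]
    have haemem : ∀ᵐ q ∂(μ.prod ν), q ∈ closure U ×ˢ closure U := by
      rw [ae_iff]
      convert h0 using 2
      exact rfl
    have hae : ∀ᵐ q ∂(μ.prod ν), ‖d q.1 q.2 ^ s‖ ≤ D ^ s := by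
      filter_upwards [haemem] with q hq
      rw [Real.norm_eq_abs, abs_of_nonneg (Real.rpow_nonneg (hd_nonneg _ _) s)]
      exact Real.rpow_le_rpow (hd_nonneg _ _)
        (hD.2 ⟨q.1, hq.1, q.2, hq.2, rfl⟩) hs0.le
    have hint : ∫ q, d q.1 q.2 ^ s ∂(μ.prod ν) ≤ D ^ s := by
      calc ∫ q, d q.1 q.2 ^ s ∂(μ.prod ν) ≤ ‖∫ q, d q.1 q.2 ^ s ∂(μ.prod ν)‖ :=
            le_abs_self _
        _ ≤ D ^ s * ((μ.prod ν) univ).toReal := norm_integral_le_of_norm_le_const hae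
        _ = D ^ s := by simp
    have hmem : (∫ q, d q.1 q.2 ^ s ∂(μ.prod ν)) ∈
        {c : ℝ | ∃ π : Measure (EuclideanSpace ℝ (Fin n) × EuclideanSpace ℝ (Fin n)),
          IsProbabilityMeasure π ∧ π.map Prod.fst = μ ∧ π.map Prod.snd = ν ∧
          c = ∫ q, d q.1 q.2 ^ s ∂π} :=
      ⟨μ.prod ν, inferInstance, by simp [Measure.map_fst_prod],
        by simp [Measure.map_snd_prod], rfl⟩
    have hbdd : BddBelow {c : ℝ | ∃ π : Measure (EuclideanSpace ℝ (Fin n) × EuclideanSpace ℝ (Fin n)),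
          IsProbabilityMeasure π ∧ π.map Prod.fst = μ ∧ π.map Prod.snd = ν ∧
          c = ∫ q, d q.1 q.2 ^ s ∂π} := by
      refine ⟨0, ?_⟩
      rintro c ⟨π, hπ, _, _, rfl⟩
      exact integral_nonneg fun q => Real.rpow_nonneg (hd_nonneg _ _) s
    exact le_trans (csInf_le hbdd hmem) hint
end

section
/- Let p_j → +∞ be a sequence of exponents with p_j > 1, and for each j let u_j ∈ L^{p_j}(U) with ‖u_j‖_{L^{p_j}(U)} = 1. Suppose u_j converges uniformly on cl(U) to a continuous function u with ‖u‖_{L^∞(U)} = 1. Then lim_{j→∞} ∫_U |u_j|^{p_j − 1} dx = 1. -/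
open MeasureTheory Set Filter Topology ENNReal

/-- Key step of Lemma 4.1: if `p_j → ∞`, `‖u_j‖_{L^{p_j}(U)} = 1`, and `u_j → u`
uniformly on `cl U` with `u` continuous and `‖u‖_{L^∞(U)} = 1`, then
`∫_U |u_j|^{p_j - 1} dx → 1`. -/
theorem tendsto_integral_rpow_sub_one_of_unif_conv
    {n : ℕ} (hn : 1 ≤ n) (U : Set (EuclideanSpace ℝ (Fin n)))
    (hUo : IsOpen U) (hUne : U.Nonempty) (hUb : Bornology.IsBounded U)
    (p : ℕ → ℝ) (hp1 : ∀ j, 1 < p j) (hp : Tendsto p atTop atTop)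
    (u : ℕ → EuclideanSpace ℝ (Fin n) → ℝ) (hum : ∀ j, Measurable (u j))
    (huL : ∀ j, eLpNorm (u j) (ENNReal.ofReal (p j)) (volume.restrict U) = 1)
    (v : EuclideanSpace ℝ (Fin n) → ℝ) (hvc : ContinuousOn v (closure U))
    (huv : TendstoUniformlyOn u v atTop (closure U))
    (hvL : eLpNorm v ⊤ (volume.restrict U) = 1) :
    Tendsto (fun j => ∫ x in U, |u j x| ^ (p j - 1)) atTop (nhds 1) := by
  have hUm : MeasurableSet U := hUo.measurableSet
  have hUvol : volume U ≠ ⊤ := hUb.measure_lt_top.ne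
  set volU : ℝ := (volume U).toReal with hvolU
  haveI : IsFiniteMeasure (volume.restrict U) :=
    ⟨by rwa [Measure.restrict_apply_univ, lt_top_iff_ne_top]⟩
  -- `|v| ≤ 1` on `U`
  have hvae : ∀ᵐ x ∂(volume.restrict U), |v x| ≤ 1 := by
    have h := ae_le_eLpNormEssSup (f := v) (μ := volume.restrict U)
    rw [← eLpNorm_exponent_top, hvL] at h
    filter_upwards [h] with x hx
    have h2 : ‖v x‖₊ ≤ (1 : NNReal) := by rw [enorm_eq_nnnorm] at hx; exact_mod_cast hx
    have h3 : (‖v x‖₊ : ℝ) ≤ 1 := NNReal.coe_le_coe.mpr h2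
    simpa [← Real.norm_eq_abs, coe_nnnorm] using h3
  have hv1 : ∀ x ∈ U, |v x| ≤ 1 := by
    by_contra h
    push_neg at h
    obtain ⟨x₀, hx₀U, hx₀⟩ := h
    have hcx : ContinuousAt v x₀ :=
      (hvc x₀ (subset_closure hx₀U)).continuousAt
        (mem_of_superset (hUo.mem_nhds hx₀U) subset_closure)
    have hev : ∀ᶠ x in 𝓝 x₀, 1 < |v x| :=
      (continuous_abs.continuousAt.comp hcx).eventually_const_lt hx₀
    obtain ⟨t, hts, hto, hx₀t⟩ := mem_nhds_iff.mp hev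
    have hnull : volume.restrict U (t ∩ U) = 0 := by
      refine measure_mono_null (fun x hx => ?_) (ae_iff.mp hvae)
      exact not_le.mpr (hts hx.1)
    have hpos : 0 < volume.restrict U (t ∩ U) := by
      rw [Measure.restrict_apply (hto.inter hUo).measurableSet, inter_assoc, inter_self]
      exact (hto.inter hUo).measure_pos volume ⟨x₀, hx₀t, hx₀U⟩
    exact hpos.ne' hnull
  -- `∫ |u j|^{p j} = 1`
  have hint : ∀ j, ∫ x in U, |u j x| ^ (p j) = 1 := by
    intro j
    have hq0 : (0 : ℝ) < p j := lt_trans one_pos (hp1 j)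
    have h1 := huL j
    rw [eLpNorm_eq_lintegral_rpow_enorm_toReal (by simp [ENNReal.ofReal_eq_zero]; linarith)
      ENNReal.ofReal_ne_top, ENNReal.toReal_ofReal hq0.le] at h1
    have h2 : ∫⁻ x, (‖u j x‖₊ : ℝ≥0∞) ^ (p j) ∂(volume.restrict U) = 1 := by
      have h3 := congrArg (· ^ (p j)) h1
      simpa [← ENNReal.rpow_mul, one_div, inv_mul_cancel₀ hq0.ne', enorm_eq_nnnorm] using h3
    rw [integral_eq_lintegral_of_nonneg_ae
        (ae_of_all _ fun x => Real.rpow_nonneg (abs_nonneg _) _)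
        (((hum j).abs.pow_const (p j)).aestronglyMeasurable)]
    have h4 : ∀ x, ENNReal.ofReal (|u j x| ^ (p j)) = (‖u j x‖₊ : ℝ≥0∞) ^ (p j) := by
      intro x
      rw [← enorm_eq_nnnorm, ← ofReal_norm_eq_enorm, ← ENNReal.ofReal_rpow_of_nonneg (abs_nonneg _) hq0.le,
        Real.norm_eq_abs]
    simp_rw [h4, h2, ENNReal.toReal_one]
  -- key eventual two-sided bound
  have key : ∀ δ : ℝ, 0 < δ → δ < 1 → ∀ᶠ j in atTop,
      1 / (1 + δ) ≤ (∫ x in U, |u j x| ^ (p j - 1)) ∧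
      (∫ x in U, |u j x| ^ (p j - 1)) ≤ 1 / (1 - δ) + (1 - δ) ^ (p j - 1) * volU := by
    intro δ hδ0 hδ1
    filter_upwards [Metric.tendstoUniformlyOn_iff.mp huv δ hδ0] with j hj
    set q := p j with hqdef
    have hq1 : 1 < q := hp1 j
    have hub : ∀ x ∈ U, |u j x| ≤ 1 + δ := by
      intro x hx
      have hd := hj x (subset_closure hx)
      rw [Real.dist_eq] at hd
      calc |u j x| = |v x + (u j x - v x)| := by ring_nf
        _ ≤ |v x| + |u j x - v x| := abs_add_le _ _
        _ ≤ 1 + δ := by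
            have := hv1 x hx
            have h2 : |u j x - v x| ≤ δ := by rw [abs_sub_comm]; linarith [hd, le_of_lt hd]
            linarith
    -- splitting q = (q-1)+1
    have hsplit : ∀ x : EuclideanSpace ℝ (Fin n),
        |u j x| ^ q = |u j x| ^ (q - 1) * |u j x| := by
      intro x
      nth_rewrite 1 [show q = (q - 1) + 1 by ring]
      rw [Real.rpow_add' (abs_nonneg _) (by intro hc; nlinarith), Real.rpow_one]
    -- integrability
    have hIq1 : Integrable (fun x => |u j x| ^ (q - 1)) (volume.restrict U) := by
      refine (integrable_const ((1 + δ) ^ (q - 1))).mono'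
        (((hum j).abs.pow_const (q - 1)).aestronglyMeasurable) ?_
      filter_upwards [ae_restrict_mem hUm] with x hx
      rw [Real.norm_eq_abs, abs_of_nonneg (Real.rpow_nonneg (abs_nonneg _) _)]
      exact Real.rpow_le_rpow (abs_nonneg _) (hub x hx) (by linarith)
    have hIq : Integrable (fun x => |u j x| ^ q) (volume.restrict U) := by
      refine (integrable_const ((1 + δ) ^ q)).mono'
        (((hum j).abs.pow_const q).aestronglyMeasurable) ?_
      filter_upwards [ae_restrict_mem hUm] with x hx
      rw [Real.norm_eq_abs, abs_of_nonneg (Real.rpow_nonneg (abs_nonneg _) _)]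
      exact Real.rpow_le_rpow (abs_nonneg _) (hub x hx) (by linarith)
    constructor
    · -- lower bound
      have h2 : ∫ x in U, |u j x| ^ q ≤ ∫ x in U, (1 + δ) * |u j x| ^ (q - 1) := by
        refine integral_mono_of_nonneg
          (ae_of_all _ fun x => Real.rpow_nonneg (abs_nonneg _) _)
          (hIq1.const_mul _) ?_
        filter_upwards [ae_restrict_mem hUm] with x hx
        rw [hsplit x, mul_comm]
        exact mul_le_mul_of_nonneg_right (hub x hx) (Real.rpow_nonneg (abs_nonneg _) _)
      rw [integral_const_mul, hint j] at h2
      rw [div_le_iff₀ (by linarith)]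
      linarith
    · -- upper bound
      have hptw : ∀ x ∈ U, |u j x| ^ (q - 1) ≤ |u j x| ^ q / (1 - δ) + (1 - δ) ^ (q - 1) := by
        intro x hx
        rcases le_or_gt (1 - δ) (|u j x|) with h | h
        · have h1 : |u j x| ^ (q - 1) * (1 - δ) ≤ |u j x| ^ q := by
            rw [hsplit x]
            exact mul_le_mul_of_nonneg_left h (Real.rpow_nonneg (abs_nonneg _) _)
          have h2 : |u j x| ^ (q - 1) ≤ |u j x| ^ q / (1 - δ) :=
            (le_div_iff₀ (by linarith)).mpr h1
          have h3 : 0 ≤ (1 - δ) ^ (q - 1) := Real.rpow_nonneg (by linarith) _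
          linarith
        · have h1 : |u j x| ^ (q - 1) ≤ (1 - δ) ^ (q - 1) :=
            Real.rpow_le_rpow (abs_nonneg _) h.le (by linarith)
          have h2 : 0 ≤ |u j x| ^ q / (1 - δ) :=
            div_nonneg (Real.rpow_nonneg (abs_nonneg _) _) (by linarith)
          linarith
      have h2 : (∫ x in U, |u j x| ^ (q - 1)) ≤
          ∫ x in U, (|u j x| ^ q / (1 - δ) + (1 - δ) ^ (q - 1)) := by
        refine integral_mono_of_nonneg
          (ae_of_all _ fun x => Real.rpow_nonneg (abs_nonneg _) _)
          ((hIq.div_const _).add (integrable_const _)) ?_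
        filter_upwards [ae_restrict_mem hUm] with x hx using hptw x hx
      rw [integral_add (hIq.div_const _) (integrable_const _), integral_div, hint j,
        setIntegral_const, smul_eq_mul, mul_comm] at h2
      exact h2
  -- conclude
  rw [Metric.tendsto_nhds]
  intro ε hε
  set δ : ℝ := min (ε / 4) (1 / 2) with hδdef
  have hδ0 : 0 < δ := lt_min (by linarith) (by norm_num)
  have hδ1 : δ < 1 := lt_of_le_of_lt (min_le_right _ _) (by norm_num)
  have hδh : δ ≤ 1 / 2 := min_le_right _ _
  have hδε : δ ≤ ε / 4 := min_le_left _ _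
  have hr : Tendsto (fun j => (1 - δ) ^ (p j - 1) * volU) atTop (𝓝 0) := by
    have h1 := (tendsto_rpow_atTop_of_base_lt_one (1 - δ) (by linarith) (by linarith)).comp
      (tendsto_atTop_add_const_right atTop (-1) hp)
    have h2 := h1.mul_const volU
    simpa [Function.comp, sub_eq_add_neg] using h2
  filter_upwards [key δ hδ0 hδ1, hr.eventually (gt_mem_nhds (show (0:ℝ) < ε / 4 by linarith))]
    with j hj hrj
  obtain ⟨hlo, hup⟩ := hj
  rw [Real.dist_eq, abs_lt]
  constructor
  · -- 1 - ε < F j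
    have h1 : 1 - δ ≤ 1 / (1 + δ) := by
      rw [le_div_iff₀ (by linarith)]; nlinarith
    linarith
  · -- F j < 1 + ε
    have h1 : 1 / (1 - δ) ≤ 1 + 2 * δ := by
      rw [div_le_iff₀ (by linarith)]; nlinarith
    linarith
end

section
/- Let 1 < p < ∞. The eigenvalue λ = 0 of the Neumann fractional p-Laplacian problem is isolated: there exists ε > 0 such that no λ with 0 < λ < ε is an eigenvalue. -/
open MeasureTheory Set Filter Topology ENNReal

/-- `H_{s,p}(u) = ∬_{ℝ^{2n} ∖ (Uᶜ × Uᶜ)} |u(x)-u(y)|^p / d(x,y)^{n+sp} dx dy`,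
the integral over all pairs `(x,y)` with `x ∈ U` or `y ∈ U`. -/
noncomputable def Hsp (n : ℕ) (d : EuclideanSpace ℝ (Fin n) → EuclideanSpace ℝ (Fin n) → ℝ)
    (s p : ℝ) (U : Set (EuclideanSpace ℝ (Fin n))) (u : EuclideanSpace ℝ (Fin n) → ℝ) : ℝ≥0∞ :=
  ∫⁻ q in ((Uᶜ ×ˢ Uᶜ)ᶜ : Set (EuclideanSpace ℝ (Fin n) × EuclideanSpace ℝ (Fin n))),
    ENNReal.ofReal (|u q.1 - u q.2| ^ p / d q.1 q.2 ^ ((n : ℝ) + s * p))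

/-- `‖u‖_{𝒲^{s,p}(U)}^p = ‖u‖_{L^p(U)}^p + H_{s,p}(u)`; the function `u` belongs to
`𝒲^{s,p}(U)` iff this quantity is finite. -/
noncomputable def WnormP (n : ℕ) (d : EuclideanSpace ℝ (Fin n) → EuclideanSpace ℝ (Fin n) → ℝ)
    (s p : ℝ) (U : Set (EuclideanSpace ℝ (Fin n))) (u : EuclideanSpace ℝ (Fin n) → ℝ) : ℝ≥0∞ :=
  (∫⁻ x in U, ENNReal.ofReal (|u x| ^ p)) + Hsp n d s p U u

/-- The bilinear form
`H_{s,p}(u,v) = ∬_{ℝ^{2n} ∖ (Uᶜ × Uᶜ)} |u(x)-u(y)|^{p-2}(u(x)-u(y))(v(x)-v(y)) / d(x,y)^{n+sp} dx dy`. -/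
noncomputable def HspForm (n : ℕ) (d : EuclideanSpace ℝ (Fin n) → EuclideanSpace ℝ (Fin n) → ℝ)
    (s p : ℝ) (U : Set (EuclideanSpace ℝ (Fin n))) (u v : EuclideanSpace ℝ (Fin n) → ℝ) : ℝ :=
  ∫ q in ((Uᶜ ×ˢ Uᶜ)ᶜ : Set (EuclideanSpace ℝ (Fin n) × EuclideanSpace ℝ (Fin n))),
    |u q.1 - u q.2| ^ (p - 2) * (u q.1 - u q.2) * (v q.1 - v q.2) / d q.1 q.2 ^ ((n : ℝ) + s * p)

/-- `lam` is an eigenvalue of the Neumann fractional `p`-Laplacian problem with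
eigenfunction `u`: `u ∈ 𝒲^{s,p}(U)` is not a.e. zero on `U` and
`(1/2) H_{s,p}(u,v) = lam ∫_U |u|^{p-2} u v dx` for every `v ∈ 𝒲^{s,p}(U)`. -/
def IsNeumannEigenpair (n : ℕ) (d : EuclideanSpace ℝ (Fin n) → EuclideanSpace ℝ (Fin n) → ℝ)
    (s p : ℝ) (U : Set (EuclideanSpace ℝ (Fin n))) (lam : ℝ)
    (u : EuclideanSpace ℝ (Fin n) → ℝ) : Prop :=
  Measurable u ∧ WnormP n d s p U u < ⊤ ∧
    ¬ (∀ᵐ x ∂(volume.restrict U), u x = 0) ∧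
    ∀ v : EuclideanSpace ℝ (Fin n) → ℝ, Measurable v → WnormP n d s p U v < ⊤ →
      (1 / 2) * HspForm n d s p U u v = lam * ∫ x in U, |u x| ^ (p - 2) * u x * v x

/-- `lam` is an eigenvalue of the Neumann fractional `p`-Laplacian problem. -/
def IsNeumannEigenvalue (n : ℕ) (d : EuclideanSpace ℝ (Fin n) → EuclideanSpace ℝ (Fin n) → ℝ)
    (s p : ℝ) (U : Set (EuclideanSpace ℝ (Fin n))) (lam : ℝ) : Prop :=
  ∃ u : EuclideanSpace ℝ (Fin n) → ℝ, IsNeumannEigenpair n d s p U lam u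

set_option maxHeartbeats 1000000

/-- Convexity/Bernoulli inequality for `t ↦ |t|^p`, `p > 1`. -/
lemma abs_rpow_tangent_le' {p : ℝ} (hp : 1 < p) (A B : ℝ) :
    |A| ^ p + p * |A| ^ (p - 2) * A * (B - A) ≤ |B| ^ p := by
  have hp0 : p ≠ 0 := by linarith
  rcases eq_or_ne A 0 with hA | hA
  · simp [hA, Real.zero_rpow hp0]
    positivity
  · have hAabs : 0 < |A| := abs_pos.mpr hA
    have h2 : |A| ^ p = |A| ^ (p - 2) * A ^ 2 := by
      have e1 : |A| ^ p = |A| ^ (p - 2) * |A| ^ (2:ℝ) := by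
        rw [← Real.rpow_add hAabs]; norm_num
      have e2 : |A| ^ (2:ℝ) = A ^ 2 := by
        rw [show (2:ℝ) = ((2:ℕ):ℝ) by norm_num, Real.rpow_natCast, sq_abs]
      rw [e1, e2]
    have hrw : p * |A| ^ (p - 2) * A * (B - A) = |A| ^ p * (p * (B / A - 1)) := by
      have hBA' : A ^ 2 * (B / A) = A * B := by rw [sq, mul_assoc, mul_div_cancel₀ B hA]
      rw [h2]
      linear_combination (-(p * |A| ^ (p - 2))) * hBA'
    rw [hrw]
    rcases le_or_gt 0 (B / A) with hBA | hBA
    · have hb : -1 ≤ B / A - 1 := by linarith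
      have hB := one_add_mul_self_le_rpow_one_add hb hp.le
      have h1 : (1 + (B / A - 1)) ^ p = |B / A| ^ p := by
        rw [show 1 + (B / A - 1) = B / A by ring, abs_of_nonneg hBA]
      have h2' : |A| ^ p * (1 + p * (B / A - 1)) ≤ |A| ^ p * |B / A| ^ p := by
        rw [← h1]
        exact mul_le_mul_of_nonneg_left hB (Real.rpow_nonneg (abs_nonneg _) p)
      calc |A| ^ p + |A| ^ p * (p * (B / A - 1))
          = |A| ^ p * (1 + p * (B / A - 1)) := by ring
        _ ≤ |A| ^ p * |B / A| ^ p := h2'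
        _ = |B| ^ p := by
            rw [← Real.mul_rpow (abs_nonneg _) (abs_nonneg _), ← abs_mul,
              mul_div_cancel₀ B hA]
    · have h1 : 1 + p * (B / A - 1) ≤ 0 := by nlinarith
      have h3 : |A| ^ p * (1 + p * (B / A - 1)) ≤ 0 :=
        mul_nonpos_of_nonneg_of_nonpos (Real.rpow_nonneg (abs_nonneg _) p) h1
      have h4 : (0:ℝ) ≤ |B| ^ p := Real.rpow_nonneg (abs_nonneg _) p
      nlinarith

lemma abs_g_le' {p : ℝ} (hp : 1 < p) (a : ℝ) : |(|a| ^ (p - 2) * a)| ≤ 1 + |a| ^ p := by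
  rcases eq_or_ne a 0 with ha | ha
  · simp [ha, Real.zero_rpow (by linarith : p ≠ 0)]
  · have h0 : 0 < |a| := abs_pos.mpr ha
    have key : |(|a| ^ (p - 2) * a)| = |a| ^ (p - 1) := by
      rw [abs_mul, abs_of_nonneg (Real.rpow_nonneg (abs_nonneg a) _),
        show p - 1 = (p - 2) + 1 by ring, Real.rpow_add h0, Real.rpow_one]
    rw [key]
    rcases le_or_gt |a| 1 with h1 | h1
    · have : |a| ^ (p - 1) ≤ 1 := Real.rpow_le_one (abs_nonneg a) h1 (by linarith)
      have : (0:ℝ) ≤ |a| ^ p := Real.rpow_nonneg (abs_nonneg a) p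
      linarith
    · have : |a| ^ (p - 1) ≤ |a| ^ p :=
        Real.rpow_le_rpow_of_exponent_le h1.le (by linarith)
      have : (0:ℝ) ≤ |a| ^ p := Real.rpow_nonneg (abs_nonneg a) p
      linarith

/-- `φ a = |a|^(p-2) a` is measurable. -/
lemma measurable_absg' {p : ℝ} (hp : 1 < p) : Measurable fun a : ℝ => |a| ^ (p - 2) * a := by
  have heq : (fun a : ℝ => |a| ^ (p - 2) * a)
      = fun a : ℝ => |a| ^ (p - 1) * (if a < 0 then (-1:ℝ) else if a = 0 then 0 else 1) := by
    funext a
    rcases lt_trichotomy a 0 with h | h | h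
    · have h0 : 0 < |a| := abs_pos.mpr h.ne
      rw [if_pos h]
      have : |a| ^ (p - 1) = |a| ^ (p - 2) * |a| := by
        rw [show p - 1 = (p - 2) + 1 by ring, Real.rpow_add h0, Real.rpow_one]
      rw [this, abs_of_neg h]; ring
    · simp [h]
    · have h0 : 0 < |a| := abs_pos.mpr h.ne'
      rw [if_neg (not_lt.mpr h.le), if_neg h.ne']
      have : |a| ^ (p - 1) = |a| ^ (p - 2) * |a| := by
        rw [show p - 1 = (p - 2) + 1 by ring, Real.rpow_add h0, Real.rpow_one]
      rw [this, abs_of_pos h]; ring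
  rw [heq]
  apply Measurable.mul
  · exact (continuous_abs.rpow_const (fun x => Or.inr (by linarith))).measurable
  · apply Measurable.ite (measurableSet_lt measurable_id measurable_const) measurable_const
    apply Measurable.ite _ measurable_const measurable_const
    exact measurable_id (measurableSet_singleton (0:ℝ))

lemma abs_sq_rpow {p : ℝ} (hp : 1 < p) (a : ℝ) : |a| ^ (p - 2) * a * a = |a| ^ p := by
  rcases eq_or_ne a 0 with ha | ha
  · simp [ha, Real.zero_rpow (by linarith : p ≠ 0)]
  · have h0 : 0 < |a| := abs_pos.mpr ha
    have e1 : |a| ^ p = |a| ^ (p - 2) * |a| ^ (2:ℝ) := by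
      rw [← Real.rpow_add h0]; norm_num
    have e2 : |a| ^ (2:ℝ) = a ^ 2 := by
      rw [show (2:ℝ) = ((2:ℕ):ℝ) by norm_num, Real.rpow_natCast, sq_abs]
    rw [e1, e2]; ring


/-- Lemma 5.7: the eigenvalue `λ = 0` of the Neumann fractional `p`-Laplacian problem is
isolated: there is `ε > 0` such that no `λ` with `0 < λ < ε` is an eigenvalue. -/
theorem zero_eigenvalue_isolated
    {n : ℕ} (hn : 1 ≤ n) (U : Set (EuclideanSpace ℝ (Fin n)))
    (hUo : IsOpen U) (hUne : U.Nonempty) (hUb : Bornology.IsBounded U)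
    (s : ℝ) (hs : s ∈ Set.Ioo (0 : ℝ) 1) (p : ℝ) (hp : 1 < p)
    (d : EuclideanSpace ℝ (Fin n) → EuclideanSpace ℝ (Fin n) → ℝ)
    (hdsymm : ∀ x y, d x y = d y x)
    (hdtri : ∀ x y z, d x z ≤ d x y + d y z)
    (c₁ c₂ : ℝ) (hc₁ : 0 < c₁) (hc₂ : 0 < c₂)
    (hdl : ∀ x y, c₁ * dist x y ≤ d x y) (hdu : ∀ x y, d x y ≤ c₂ * dist x y)
    : ∃ ε : ℝ, 0 < ε ∧ ∀ lam : ℝ, 0 < lam → lam < ε →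
      ¬ IsNeumannEigenvalue n d s p U lam := by
  obtain ⟨hs0, hs1⟩ := hs
  have hp0 : p ≠ 0 := by linarith
  have hppos : 0 < p := by linarith
  -- basic facts about U and exponents
  obtain ⟨D0, hD0⟩ := Metric.isBounded_iff.mp hUb
  set D : ℝ := max D0 1 with hD_def
  have hDpos : (0:ℝ) < D := lt_of_lt_of_le one_pos (le_max_right _ _)
  have hD : ∀ x ∈ U, ∀ y ∈ U, dist x y ≤ D := fun x hx y hy =>
    le_trans (hD0 hx hy) (le_max_left _ _)
  have hnsp : (0:ℝ) ≤ (n : ℝ) + s * p := by positivity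
  set M : ℝ := (c₂ * D) ^ ((n : ℝ) + s * p) with hM_def
  have hMpos : 0 < M := Real.rpow_pos_of_pos (by positivity) _
  have hUm : MeasurableSet U := hUo.measurableSet
  have hvol_pos : 0 < volume U := hUo.measure_pos volume hUne
  have hvol_fin : volume U < ⊤ := hUb.measure_lt_top
  have hVpos : 0 < (volume U).toReal := ENNReal.toReal_pos hvol_pos.ne' hvol_fin.ne
  refine ⟨(volume U).toReal / (2 * M), div_pos hVpos (by positivity), ?_⟩
  set ε : ℝ := (volume U).toReal / (2 * M) with hε_def
  rintro lam hlam hlamε ⟨u, hum, hWu, hune, heq⟩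
  have hdnn : ∀ x y, 0 ≤ d x y := fun x y =>
    le_trans (by positivity) (hdl x y)
  haveI : IsFiniteMeasure (volume.restrict U) :=
    ⟨by rwa [Measure.restrict_apply_univ]⟩
  -- the constant function 1 is admissible
  have hW1 : WnormP n d s p U (fun _ => 1) < ⊤ := by
    unfold WnormP Hsp
    simp only [sub_self, abs_zero, Real.zero_rpow hp0, zero_div, ofReal_zero,
      lintegral_zero, add_zero, abs_one, Real.one_rpow, ofReal_one]
    rw [setLIntegral_const]
    simpa using hvol_fin
  -- test with v = 1 : ∫ |u|^{p-2} u = 0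
  have h1eq := heq (fun _ => 1) measurable_const hW1
  have hg0 : ∫ x in U, |u x| ^ (p - 2) * u x = 0 := by
    have hL : HspForm n d s p U u (fun _ => 1) = 0 := by
      unfold HspForm
      simp
    rw [hL] at h1eq
    have h2 : lam * ∫ x in U, |u x| ^ (p - 2) * u x * (fun _ => (1:ℝ)) x = 0 := by
      rw [← h1eq]; ring
    have h3 := (mul_eq_zero.mp h2).resolve_left hlam.ne'
    simpa using h3
  -- integrability of |u|^p on U
  have hWfin1 : (∫⁻ x in U, ENNReal.ofReal (|u x| ^ p)) < ⊤ :=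
    lt_of_le_of_lt (le_add_right le_rfl) hWu
  have hHfin : Hsp n d s p U u < ⊤ :=
    lt_of_le_of_lt (le_add_left le_rfl) hWu
  have hupm : Measurable fun x => |u x| ^ p :=
    (Real.continuous_rpow_const hppos.le).measurable.comp hum.abs
  have hIp : Integrable (fun x => |u x| ^ p) (volume.restrict U) :=
    ⟨hupm.aestronglyMeasurable,
      (hasFiniteIntegral_iff_ofReal (ae_of_all _ fun x =>
        Real.rpow_nonneg (abs_nonneg _) p)).mpr hWfin1⟩
  set I : ℝ := ∫ x in U, |u x| ^ p with hI_def
  have hInn : 0 ≤ I := integral_nonneg fun x => Real.rpow_nonneg (abs_nonneg _) p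
  have hIpos : 0 < I := by
    rcases hInn.lt_or_eq with h | h
    · exact h
    · exfalso
      apply hune
      have h0 := (integral_eq_zero_iff_of_nonneg
        (fun x => Real.rpow_nonneg (abs_nonneg _) p) hIp).mp h.symm
      filter_upwards [h0] with x hx
      have : |u x| = 0 := by
        by_contra habs
        have : 0 < |u x| := lt_of_le_of_ne (abs_nonneg _) (Ne.symm habs)
        exact absurd hx (ne_of_gt (Real.rpow_pos_of_pos this p))
      exact abs_eq_zero.mp this
  -- integrability of g = |u|^{p-2} u on U
  have hgm : Measurable fun x => |u x| ^ (p - 2) * u x :=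
    (measurable_absg' hp).comp hum
  have hgint : Integrable (fun x => |u x| ^ (p - 2) * u x) (volume.restrict U) := by
    refine Integrable.mono ((integrable_const (1:ℝ)).add hIp) hgm.aestronglyMeasurable
      (ae_of_all _ fun x => ?_)
    rw [Real.norm_eq_abs, Real.norm_eq_abs]
    refine le_trans (abs_g_le' hp (u x)) ?_
    exact le_abs_self _
  -- key per-slice inequality
  have hkey : ∀ c : ℝ, ENNReal.ofReal I ≤ ∫⁻ x in U, ENNReal.ofReal (|u x - c| ^ p) := by
    intro c
    have fcm : Measurable fun x => |u x - c| ^ p :=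
      (Real.continuous_rpow_const hppos.le).measurable.comp (hum.sub measurable_const).abs
    have fcnn : ∀ x, 0 ≤ |u x - c| ^ p := fun x => Real.rpow_nonneg (abs_nonneg _) p
    by_cases hfi : Integrable (fun x => |u x - c| ^ p) (volume.restrict U)
    · rw [← ofReal_integral_eq_lintegral_ofReal hfi (ae_of_all _ fcnn)]
      apply ENNReal.ofReal_le_ofReal
      have hmono : ∀ x, |u x| ^ p - (p * c) * (|u x| ^ (p - 2) * u x) ≤ |u x - c| ^ p := by
        intro x
        have h1 := abs_rpow_tangent_le' hp (u x) (u x - c)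
        have h2 : p * |u x| ^ (p - 2) * u x * ((u x - c) - u x)
            = -((p * c) * (|u x| ^ (p - 2) * u x)) := by ring
        linarith [h1, h2.ge, h2.le]
      have hint2 : Integrable (fun x => |u x| ^ p - (p * c) * (|u x| ^ (p - 2) * u x))
          (volume.restrict U) := hIp.sub (hgint.const_mul (p * c))
      have hm := integral_mono hint2 hfi hmono
      calc I = ∫ x in U, (|u x| ^ p - (p * c) * (|u x| ^ (p - 2) * u x)) := by
            rw [integral_sub hIp (hgint.const_mul _)]
            have : ∫ a in U, (p * c) * (|u a| ^ (p - 2) * u a) =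
                (p * c) * ∫ a in U, |u a| ^ (p - 2) * u a := integral_const_mul _ _
            rw [this, hg0, mul_zero, sub_zero]
        _ ≤ _ := hm
    · have htop : (∫⁻ x in U, ENNReal.ofReal (|u x - c| ^ p)) = ⊤ := by
        by_contra hne
        exact hfi ⟨fcm.aestronglyMeasurable,
          (hasFiniteIntegral_iff_ofReal (ae_of_all _ fcnn)).mpr (lt_top_iff_ne_top.mpr hne)⟩
      rw [htop]; exact le_top
  -- Tonelli lower bound for the double integral
  have hprodm : Measurable fun q : EuclideanSpace ℝ (Fin n) × EuclideanSpace ℝ (Fin n) =>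
      ENNReal.ofReal (|u q.1 - u q.2| ^ p) :=
    ENNReal.measurable_ofReal.comp
      ((Real.continuous_rpow_const hppos.le).measurable.comp
        (((hum.comp measurable_fst).sub (hum.comp measurable_snd)).abs))
  have hTon : ENNReal.ofReal I * volume U ≤
      ∫⁻ q in U ×ˢ U, ENNReal.ofReal (|u q.1 - u q.2| ^ p) := by
    have hre : (volume : Measure (EuclideanSpace ℝ (Fin n) × EuclideanSpace ℝ (Fin n))).restrict
        (U ×ˢ U) = (volume.restrict U).prod (volume.restrict U) := by
      rw [MeasureTheory.Measure.volume_eq_prod, Measure.prod_restrict]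
    rw [hre, lintegral_prod _ (hprodm.aemeasurable)]
    calc ENNReal.ofReal I * volume U = ∫⁻ _ in U, ENNReal.ofReal I := by
          rw [setLIntegral_const]
      _ ≤ _ := by
          apply lintegral_mono_ae
          filter_upwards with x
          have : ∀ y, ENNReal.ofReal (|u x - u y| ^ p) = ENNReal.ofReal (|u y - u x| ^ p) := by
            intro y; rw [abs_sub_comm]
          calc ENNReal.ofReal I ≤ ∫⁻ y in U, ENNReal.ofReal (|u y - u x| ^ p) := hkey (u x)
            _ = ∫⁻ y in U, ENNReal.ofReal (|u x - u y| ^ p) := by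
                apply lintegral_congr; intro y; rw [abs_sub_comm]
  -- chain of bounds for Hsp
  have hchain : (ENNReal.ofReal I * volume U) / ENNReal.ofReal M ≤ Hsp n d s p U u := by
    have hsub : (U ×ˢ U : Set (EuclideanSpace ℝ (Fin n) × EuclideanSpace ℝ (Fin n)))
        ⊆ (Uᶜ ×ˢ Uᶜ)ᶜ := by
      rintro ⟨x, y⟩ ⟨hx, hy⟩ hmem
      exact hmem.1 hx
    have step1 : ∫⁻ q in U ×ˢ U, ENNReal.ofReal (|u q.1 - u q.2| ^ p / M)
        ≤ ∫⁻ q in U ×ˢ U, ENNReal.ofReal (|u q.1 - u q.2| ^ p / d q.1 q.2 ^ ((n : ℝ) + s * p)) := by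
      apply lintegral_mono_ae
      rw [ae_restrict_iff' (hUm.prod hUm)]
      filter_upwards with q hq
      obtain ⟨hx, hy⟩ := hq
      apply ENNReal.ofReal_le_ofReal
      rcases eq_or_ne (d q.1 q.2) 0 with hd0 | hd0
      · have hdist : dist q.1 q.2 = 0 := by
          have h1 := hdl q.1 q.2
          rw [hd0] at h1
          nlinarith [dist_nonneg (x := q.1) (y := q.2)]
        have hq12 : q.1 = q.2 := by rwa [dist_eq_zero] at hdist
        rw [hq12, sub_self, abs_zero, Real.zero_rpow hp0, zero_div, zero_div]
      · have hdpos : 0 < d q.1 q.2 := lt_of_le_of_ne (hdnn _ _) (Ne.symm hd0)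
        have hde : d q.1 q.2 ^ ((n : ℝ) + s * p) ≤ M := by
          apply Real.rpow_le_rpow (hdnn _ _) _ hnsp
          calc d q.1 q.2 ≤ c₂ * dist q.1 q.2 := hdu _ _
            _ ≤ c₂ * D := mul_le_mul_of_nonneg_left (hD _ hx _ hy) hc₂.le
        have hdepos : 0 < d q.1 q.2 ^ ((n : ℝ) + s * p) := Real.rpow_pos_of_pos hdpos _
        exact div_le_div_of_nonneg_left (Real.rpow_nonneg (abs_nonneg _) p) hdepos hde
    have step2 : ∫⁻ q in U ×ˢ U, ENNReal.ofReal (|u q.1 - u q.2| ^ p / M)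
        = (∫⁻ q in U ×ˢ U, ENNReal.ofReal (|u q.1 - u q.2| ^ p)) / ENNReal.ofReal M := by
      simp_rw [ENNReal.ofReal_div_of_pos hMpos, div_eq_mul_inv]
      exact lintegral_mul_const'' _ hprodm.aemeasurable
    have step3 : ∫⁻ q in U ×ˢ U,
        ENNReal.ofReal (|u q.1 - u q.2| ^ p / d q.1 q.2 ^ ((n : ℝ) + s * p))
        ≤ Hsp n d s p U u := lintegral_mono_set hsub
    calc (ENNReal.ofReal I * volume U) / ENNReal.ofReal M
        ≤ (∫⁻ q in U ×ˢ U, ENNReal.ofReal (|u q.1 - u q.2| ^ p)) / ENNReal.ofReal M :=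
          ENNReal.div_le_div_right hTon _
      _ = ∫⁻ q in U ×ˢ U, ENNReal.ofReal (|u q.1 - u q.2| ^ p / M) := step2.symm
      _ ≤ ∫⁻ q in U ×ˢ U, ENNReal.ofReal (|u q.1 - u q.2| ^ p / d q.1 q.2 ^ ((n : ℝ) + s * p)) :=
          step1
      _ ≤ Hsp n d s p U u := step3
  -- d is continuous, hence the Hsp integrand is measurable
  have hdcont : Continuous fun q : EuclideanSpace ℝ (Fin n) × EuclideanSpace ℝ (Fin n) =>
      d q.1 q.2 := by
    have hlip : ∀ a b : EuclideanSpace ℝ (Fin n) × EuclideanSpace ℝ (Fin n),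
        dist (d a.1 a.2) (d b.1 b.2) ≤ (2 * c₂) * dist a b := by
      intro a b
      have key : ∀ x y x' y' : EuclideanSpace ℝ (Fin n),
          d x y - d x' y' ≤ c₂ * dist x x' + c₂ * dist y y' := by
        intro x y x' y'
        have h1 : d x y ≤ d x x' + d x' y := hdtri _ _ _
        have h2 : d x' y ≤ d x' y' + d y' y := hdtri _ _ _
        have h3 : d x x' ≤ c₂ * dist x x' := hdu _ _
        have h4 : d y' y ≤ c₂ * dist y y' := by
          rw [dist_comm y y']; exact hdu _ _
        linarith
      rw [Real.dist_eq, abs_sub_le_iff]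
      have hfst : dist a.1 b.1 ≤ dist a b := le_trans (le_max_left _ _) (le_of_eq (Prod.dist_eq).symm)
      have hsnd : dist a.2 b.2 ≤ dist a b := le_trans (le_max_right _ _) (le_of_eq (Prod.dist_eq).symm)
      have e1 := mul_le_mul_of_nonneg_left hfst hc₂.le
      have e2 := mul_le_mul_of_nonneg_left hsnd hc₂.le
      constructor
      · have := key a.1 a.2 b.1 b.2
        linarith
      · have := key b.1 b.2 a.1 a.2
        rw [dist_comm b.1 a.1, dist_comm b.2 a.2] at this
        linarith
    exact (LipschitzWith.of_dist_le_mul (K := (2 * c₂).toNNReal) (by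
      intro a b
      refine le_trans (hlip a b) ?_
      rw [Real.coe_toNNReal _ (by positivity)])).continuous
  -- HspForm u u equals (Hsp u).toReal
  have hFm : Measurable fun q : EuclideanSpace ℝ (Fin n) × EuclideanSpace ℝ (Fin n) =>
      |u q.1 - u q.2| ^ p / d q.1 q.2 ^ ((n : ℝ) + s * p) := by
    apply Measurable.div
    · exact (Real.continuous_rpow_const hppos.le).measurable.comp
        (((hum.comp measurable_fst).sub (hum.comp measurable_snd)).abs)
    · exact (hdcont.rpow_const (fun q => Or.inr hnsp)).measurable
  have hform : HspForm n d s p U u u = (Hsp n d s p U u).toReal := by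
    unfold HspForm Hsp
    have hcongr : ∀ q : EuclideanSpace ℝ (Fin n) × EuclideanSpace ℝ (Fin n),
        |u q.1 - u q.2| ^ (p - 2) * (u q.1 - u q.2) * (u q.1 - u q.2)
          / d q.1 q.2 ^ ((n : ℝ) + s * p)
        = |u q.1 - u q.2| ^ p / d q.1 q.2 ^ ((n : ℝ) + s * p) := by
      intro q; rw [abs_sq_rpow hp]
    rw [show (fun q : EuclideanSpace ℝ (Fin n) × EuclideanSpace ℝ (Fin n) =>
        |u q.1 - u q.2| ^ (p - 2) * (u q.1 - u q.2) * (u q.1 - u q.2)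
          / d q.1 q.2 ^ ((n : ℝ) + s * p)) = fun q =>
        |u q.1 - u q.2| ^ p / d q.1 q.2 ^ ((n : ℝ) + s * p) from funext hcongr]
    rw [integral_eq_lintegral_of_nonneg_ae
      (ae_of_all _ fun q => div_nonneg (Real.rpow_nonneg (abs_nonneg _) p)
        (Real.rpow_nonneg (hdnn _ _) _))
      hFm.aestronglyMeasurable]
  -- test with v = u
  have hueq := heq u hum hWu
  have hRHS : ∫ x in U, |u x| ^ (p - 2) * u x * u x = I := by
    apply integral_congr_ae
    filter_upwards with x
    exact abs_sq_rpow hp (u x)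
  rw [hRHS, hform] at hueq
  -- final computation
  have htoReal : ((ENNReal.ofReal I * volume U) / ENNReal.ofReal M).toReal
      = I * (volume U).toReal / M := by
    rw [ENNReal.toReal_div, ENNReal.toReal_mul, ENNReal.toReal_ofReal hInn,
      ENNReal.toReal_ofReal hMpos.le]
  have hmono : ((ENNReal.ofReal I * volume U) / ENNReal.ofReal M).toReal
      ≤ (Hsp n d s p U u).toReal :=
    ENNReal.toReal_mono hHfin.ne hchain
  rw [htoReal] at hmono
  have hfinal : I * (volume U).toReal / M ≤ 2 * (lam * I) := by
    calc I * (volume U).toReal / M ≤ (Hsp n d s p U u).toReal := hmono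
      _ = 2 * (lam * I) := by rw [← hueq]; ring
  have : ε ≤ lam := by
    rw [hε_def]
    rw [div_le_iff₀ (by positivity)] at hfinal ⊢
    nlinarith
  linarith
end

section
/- Λ_{s,∞} := inf{ H_{s,∞}(u)/‖u‖_{L^∞(U)} : u ∈ 𝒲^{s,∞}(U), u ≢ 0, sup_{x∈U} u(x) + inf_{x∈U} u(x) = 0 } equals 2/(diam_d(U))^s, where diam_d(U) = max_{x,y ∈ cl(U)} d(x,y). The upper bound is attained by the function u(x) = −1 + (2/(diam_d(U))^s) d(x, y₀)^s, where y₀ realizes the diameter together with some x₀ ∈ cl(U). -/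
open MeasureTheory Set Filter Topology ENNReal

lemma aux_abs_rpow_sub_rpow_le {a b s : ℝ} (ha : 0 ≤ a) (hb : 0 ≤ b) (hs0 : 0 ≤ s)
    (hs1 : s ≤ 1) : |a ^ s - b ^ s| ≤ |a - b| ^ s := by
  wlog hab : b ≤ a generalizing a b
  · rw [abs_sub_comm, abs_sub_comm a b]; exact this hb ha (le_of_not_ge hab)
  have h1 : a ^ s ≤ (a - b) ^ s + b ^ s := by
    have h := NNReal.rpow_add_le_add_rpow (⟨a - b, by linarith⟩ : NNReal) (⟨b, hb⟩ : NNReal)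
      hs0 hs1
    have h2 : ((a - b) + b) ^ s ≤ (a - b) ^ s + b ^ s := by exact_mod_cast h
    simpa using h2
  have h2 : b ^ s ≤ a ^ s := Real.rpow_le_rpow hb hab hs0
  rw [abs_of_nonneg (by linarith), abs_of_nonneg (by linarith)]
  linarith

/-- `H_{s,∞}(u) = sup { |u(x)-u(y)| / d(x,y)^s : x ∈ U or y ∈ U, x ≠ y }`. -/
noncomputable def HsInfty (n : ℕ) (d : EuclideanSpace ℝ (Fin n) → EuclideanSpace ℝ (Fin n) → ℝ)
    (s : ℝ) (U : Set (EuclideanSpace ℝ (Fin n))) (u : EuclideanSpace ℝ (Fin n) → ℝ) : ℝ :=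
  sSup {r : ℝ | ∃ x y : EuclideanSpace ℝ (Fin n),
    (x ∈ U ∨ y ∈ U) ∧ x ≠ y ∧ r = |u x - u y| / d x y ^ s}

/-- The sup norm `‖u‖_{L^∞(U)} = sup_{x ∈ U} |u(x)|`. -/
noncomputable def supNormOn {n : ℕ} (U : Set (EuclideanSpace ℝ (Fin n)))
    (u : EuclideanSpace ℝ (Fin n) → ℝ) : ℝ :=
  sSup ((fun x => |u x|) '' U)

/-- Membership in the admissible class
`𝒜 = { u ∈ 𝒲^{s,∞}(U) ∖ {0} : sup_{x ∈ U} u(x) + inf_{x ∈ U} u(x) = 0 }`. -/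
def MemA (n : ℕ) (d : EuclideanSpace ℝ (Fin n) → EuclideanSpace ℝ (Fin n) → ℝ)
    (s : ℝ) (U : Set (EuclideanSpace ℝ (Fin n))) (u : EuclideanSpace ℝ (Fin n) → ℝ) : Prop :=
  BddAbove ((fun x => |u x|) '' U) ∧
  BddAbove {r : ℝ | ∃ x y : EuclideanSpace ℝ (Fin n),
    (x ∈ U ∨ y ∈ U) ∧ x ≠ y ∧ r = |u x - u y| / d x y ^ s} ∧
  (¬ ∀ x ∈ U, u x = 0) ∧
  sSup (u '' U) + sInf (u '' U) = 0

/-- Lemma 5.11 (Steps 1 and 2):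
`Λ_{s,∞} = inf { H_{s,∞}(u) / ‖u‖_{L^∞(U)} : u ∈ 𝒜 } = 2 / (diam_d U)^s`, and the bound
is attained by `u₀(x) = -1 + (2 / (diam_d U)^s) d(x, y₀)^s` where `y₀` realizes the
diameter together with some `x₀ ∈ cl U`. -/
theorem LambdaInfty_eq_two_div_diam_rpow
    {n : ℕ} (hn : 1 ≤ n) (U : Set (EuclideanSpace ℝ (Fin n)))
    (hUo : IsOpen U) (hUne : U.Nonempty) (hUb : Bornology.IsBounded U)
    (s : ℝ) (hs : s ∈ Set.Ioo (0 : ℝ) 1)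
    (d : EuclideanSpace ℝ (Fin n) → EuclideanSpace ℝ (Fin n) → ℝ)
    (hdsymm : ∀ x y, d x y = d y x)
    (hdtri : ∀ x y z, d x z ≤ d x y + d y z)
    (c₁ c₂ : ℝ) (hc₁ : 0 < c₁) (hc₂ : 0 < c₂)
    (hdl : ∀ x y, c₁ * dist x y ≤ d x y) (hdu : ∀ x y, d x y ≤ c₂ * dist x y)
    (D : ℝ) (hD : IsGreatest {r : ℝ | ∃ x ∈ closure U, ∃ y ∈ closure U, r = d x y} D)
    (x₀ y₀ : EuclideanSpace ℝ (Fin n)) (hx₀ : x₀ ∈ closure U) (hy₀ : y₀ ∈ closure U)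
    (hxy : d x₀ y₀ = D) :
    sInf {r : ℝ | ∃ u : EuclideanSpace ℝ (Fin n) → ℝ, MemA n d s U u ∧
        r = HsInfty n d s U u / supNormOn U u} = 2 / D ^ s ∧
    MemA n d s U (fun x => -1 + (2 / D ^ s) * d x y₀ ^ s) ∧
    HsInfty n d s U (fun x => -1 + (2 / D ^ s) * d x y₀ ^ s) /
      supNormOn U (fun x => -1 + (2 / D ^ s) * d x y₀ ^ s) = 2 / D ^ s := by
  obtain ⟨hs0, hs1⟩ := hs
  have hsne : s ≠ 0 := ne_of_gt hs0
  -- basic facts about d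
  have hd0 : ∀ x y, 0 ≤ d x y := fun x y =>
    le_trans (mul_nonneg hc₁.le dist_nonneg) (hdl x y)
  have hdxx : ∀ x, d x x = 0 := fun x =>
    le_antisymm (by simpa using hdu x x) (hd0 x x)
  have hdpos : ∀ x y, x ≠ y → 0 < d x y := fun x y h =>
    lt_of_lt_of_le (mul_pos hc₁ (dist_pos.2 h)) (hdl x y)
  have hdabs : ∀ x y z, |d x z - d y z| ≤ d x y := by
    intro x y z
    rw [abs_sub_le_iff]
    constructor
    · have := hdtri x y z; linarith
    · have := hdtri y x z; rw [hdsymm y x] at this; linarith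
  -- two distinct points of U
  obtain ⟨p, hpU⟩ := id hUne
  obtain ⟨ε₀, hε₀, hball⟩ := Metric.isOpen_iff.1 hUo p hpU
  set q : EuclideanSpace ℝ (Fin n) := p + EuclideanSpace.single (⟨0, hn⟩ : Fin n) (ε₀ / 2)
    with hq
  have hdistqp : dist q p = ε₀ / 2 := by
    rw [dist_eq_norm, hq, add_sub_cancel_left, EuclideanSpace.norm_single,
      Real.norm_eq_abs, abs_of_pos (by linarith)]
  have hqU : q ∈ U := hball (by rw [Metric.mem_ball, hdistqp]; linarith)
  have hqp : q ≠ p := by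
    intro h; rw [h, dist_self] at hdistqp; linarith
  -- D is positive
  have hdleD : ∀ x ∈ closure U, ∀ y ∈ closure U, d x y ≤ D := fun x hx y hy =>
    hD.2 ⟨x, hx, y, hy, rfl⟩
  have hDpos : 0 < D :=
    lt_of_lt_of_le (hdpos q p hqp) (hdleD q (subset_closure hqU) p (subset_closure hpU))
  have hDs : 0 < D ^ s := Real.rpow_pos_of_pos hDpos s
  have hDsne : D ^ s ≠ 0 := ne_of_gt hDs
  have hcpos : 0 < 2 / D ^ s := by positivity
  set u : EuclideanSpace ℝ (Fin n) → ℝ := fun x => -1 + (2 / D ^ s) * d x y₀ ^ s with hu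
  -- Hölder property of u
  have hHold : ∀ x y, |u x - u y| ≤ (2 / D ^ s) * d x y ^ s := by
    intro x y
    have h1 : u x - u y = (2 / D ^ s) * (d x y₀ ^ s - d y y₀ ^ s) := by
      simp only [hu]; ring
    rw [h1, abs_mul, abs_of_pos hcpos]
    refine mul_le_mul_of_nonneg_left ?_ hcpos.le
    calc |d x y₀ ^ s - d y y₀ ^ s| ≤ |d x y₀ - d y y₀| ^ s :=
          aux_abs_rpow_sub_rpow_le (hd0 _ _) (hd0 _ _) hs0.le hs1.le
      _ ≤ d x y ^ s := Real.rpow_le_rpow (abs_nonneg _) (hdabs x y y₀) hs0.le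
  -- bounds for u on closure U
  have hul : ∀ x, -1 ≤ u x := by
    intro x
    have : 0 ≤ (2 / D ^ s) * d x y₀ ^ s :=
      mul_nonneg hcpos.le (Real.rpow_nonneg (hd0 _ _) s)
    simp only [hu]; linarith
  have huu : ∀ x ∈ closure U, u x ≤ 1 := by
    intro x hx
    have h1 : d x y₀ ^ s ≤ D ^ s :=
      Real.rpow_le_rpow (hd0 _ _) (hdleD x hx y₀ hy₀) hs0.le
    have h2 : (2 / D ^ s) * d x y₀ ^ s ≤ (2 / D ^ s) * D ^ s :=
      mul_le_mul_of_nonneg_left h1 hcpos.le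
    have h3 : (2 / D ^ s) * D ^ s = 2 := div_mul_cancel₀ 2 hDsne
    simp only [hu]; linarith
  have hux₀ : u x₀ = 1 := by
    simp only [hu, hxy]
    rw [div_mul_cancel₀ 2 hDsne]; ring
  have huy₀ : u y₀ = -1 := by
    simp only [hu, hdxx y₀, Real.zero_rpow hsne]; ring
  -- approximation near boundary points
  have hcont : ∀ z, z ∈ closure U → ∀ ε : ℝ, 0 < ε → ∃ x ∈ U, |u x - u z| < ε := by
    intro z hz ε hε
    set δ : ℝ := (ε * D ^ s / 2) ^ (1 / s) / c₂ with hδdef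
    have hA : 0 < ε * D ^ s / 2 := by positivity
    have hApow : 0 < (ε * D ^ s / 2) ^ (1 / s) := Real.rpow_pos_of_pos hA _
    have hδ : 0 < δ := by positivity
    obtain ⟨x, hxU, hxd⟩ := Metric.mem_closure_iff.1 hz δ hδ
    refine ⟨x, hxU, ?_⟩
    have h1 : |u x - u z| ≤ (2 / D ^ s) * d x z ^ s := hHold x z
    have h3 : dist x z < δ := by rwa [dist_comm] at hxd
    have h4 : d x z < c₂ * δ := lt_of_le_of_lt (hdu x z) (by nlinarith)
    have h5 : d x z ^ s < (c₂ * δ) ^ s := Real.rpow_lt_rpow (hd0 _ _) h4 hs0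
    have h6 : c₂ * δ = (ε * D ^ s / 2) ^ (1 / s) := by
      rw [hδdef, mul_div_cancel₀ _ (ne_of_gt hc₂)]
    have h7 : (c₂ * δ) ^ s = ε * D ^ s / 2 := by
      rw [h6, ← Real.rpow_mul hA.le, one_div_mul_cancel hsne, Real.rpow_one]
    have h8 : (2 / D ^ s) * (ε * D ^ s / 2) = ε := by field_simp
    calc |u x - u z| ≤ (2 / D ^ s) * d x z ^ s := h1
      _ < (2 / D ^ s) * (c₂ * δ) ^ s := mul_lt_mul_of_pos_left h5 hcpos
      _ = ε := by rw [h7, h8]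
  have hnearX : ∀ ε : ℝ, 0 < ε → ∃ x ∈ U, 1 - ε < u x := by
    intro ε hε
    obtain ⟨x, hxU, hx⟩ := hcont x₀ hx₀ ε hε
    rw [hux₀] at hx
    exact ⟨x, hxU, by linarith [(abs_lt.1 hx).1]⟩
  have hnearY : ∀ ε : ℝ, 0 < ε → ∃ y ∈ U, u y < -1 + ε := by
    intro ε hε
    obtain ⟨y, hyU, hy⟩ := hcont y₀ hy₀ ε hε
    rw [huy₀] at hy
    exact ⟨y, hyU, by linarith [(abs_lt.1 hy).2]⟩
  -- sup norm of u
  have habs_bdd : ∀ x ∈ U, |u x| ≤ 1 := fun x hx =>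
    abs_le.2 ⟨hul x, huu x (subset_closure hx)⟩
  have hbddA : BddAbove ((fun x => |u x|) '' U) :=
    ⟨1, by rintro r ⟨x, hx, rfl⟩; exact habs_bdd x hx⟩
  have hsupN : supNormOn U u = 1 := by
    rw [supNormOn]
    refine le_antisymm (csSup_le (hUne.image _) ?_) ?_
    · rintro r ⟨x, hx, rfl⟩; exact habs_bdd x hx
    · refine le_of_forall_pos_le_add ?_
      intro ε hε
      obtain ⟨x, hxU, hx⟩ := hnearX ε hε
      have h2 : |u x| ≤ sSup ((fun x => |u x|) '' U) := le_csSup hbddA ⟨x, hxU, rfl⟩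
      have h1 : u x ≤ |u x| := le_abs_self _
      linarith
  have hsupu : sSup (u '' U) = 1 := by
    refine le_antisymm (csSup_le (hUne.image _) ?_) ?_
    · rintro r ⟨x, hx, rfl⟩; exact huu x (subset_closure hx)
    · refine le_of_forall_pos_le_add ?_
      intro ε hε
      obtain ⟨x, hxU, hx⟩ := hnearX ε hε
      have h2 : u x ≤ sSup (u '' U) :=
        le_csSup ⟨1, by rintro r ⟨z, hz, rfl⟩; exact huu z (subset_closure hz)⟩ ⟨x, hxU, rfl⟩
      linarith
  have hinfu : sInf (u '' U) = -1 := by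
    refine le_antisymm ?_ (le_csInf (hUne.image _) ?_)
    · refine le_of_forall_pos_le_add ?_
      intro ε hε
      obtain ⟨y, hyU, hy⟩ := hnearY ε hε
      have h2 : sInf (u '' U) ≤ u y :=
        csInf_le ⟨-1, by rintro r ⟨z, hz, rfl⟩; exact hul z⟩ ⟨y, hyU, rfl⟩
      linarith
    · rintro r ⟨x, hx, rfl⟩; exact hul x
  have hnz : ¬ ∀ x ∈ U, u x = 0 := by
    intro h
    obtain ⟨x, hxU, hx⟩ := hnearX (1/2) (by norm_num)
    rw [h x hxU] at hx
    linarith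
  -- the Hölder quotient set for u
  have hTub : ∀ r ∈ {r : ℝ | ∃ x y : EuclideanSpace ℝ (Fin n),
      (x ∈ U ∨ y ∈ U) ∧ x ≠ y ∧ r = |u x - u y| / d x y ^ s}, r ≤ 2 / D ^ s := by
    rintro r ⟨x, y, hxy', hne, rfl⟩
    have hdp : 0 < d x y ^ s := Real.rpow_pos_of_pos (hdpos x y hne) s
    rw [div_le_iff₀ hdp]
    exact hHold x y
  have hTne : {r : ℝ | ∃ x y : EuclideanSpace ℝ (Fin n),
      (x ∈ U ∨ y ∈ U) ∧ x ≠ y ∧ r = |u x - u y| / d x y ^ s}.Nonempty :=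
    ⟨_, q, p, Or.inl hqU, hqp, rfl⟩
  have hTbdd : BddAbove {r : ℝ | ∃ x y : EuclideanSpace ℝ (Fin n),
      (x ∈ U ∨ y ∈ U) ∧ x ≠ y ∧ r = |u x - u y| / d x y ^ s} := ⟨2 / D ^ s, hTub⟩
  have hHs : HsInfty n d s U u = 2 / D ^ s := by
    rw [HsInfty]
    refine le_antisymm (csSup_le hTne hTub) ?_
    refine le_of_forall_pos_le_add ?_
    intro ε hε
    set η : ℝ := min (1/2) (ε * D ^ s / 2) with hηdef
    have hη : 0 < η := lt_min (by norm_num) (by positivity)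
    have hη2 : η ≤ 1/2 := min_le_left _ _
    have hη3 : η ≤ ε * D ^ s / 2 := min_le_right _ _
    obtain ⟨x, hxU, hx⟩ := hnearX η hη
    obtain ⟨y, hyU, hy⟩ := hnearY η hη
    have huxy : u y < u x := by linarith
    have hne : x ≠ y := fun h => by rw [h] at huxy; exact lt_irrefl _ huxy
    have hdp : 0 < d x y ^ s := Real.rpow_pos_of_pos (hdpos x y hne) s
    have hdle : d x y ^ s ≤ D ^ s :=
      Real.rpow_le_rpow (hd0 _ _) (hdleD x (subset_closure hxU) y (subset_closure hyU)) hs0.le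
    have hmem : |u x - u y| / d x y ^ s ∈ {r : ℝ | ∃ x y : EuclideanSpace ℝ (Fin n),
        (x ∈ U ∨ y ∈ U) ∧ x ≠ y ∧ r = |u x - u y| / d x y ^ s} :=
      ⟨x, y, Or.inl hxU, hne, rfl⟩
    have h1 : (u x - u y) / D ^ s ≤ |u x - u y| / d x y ^ s :=
      le_trans (div_le_div_of_nonneg_left (by linarith) hdp hdle)
        ((div_le_div_iff_of_pos_right hdp).2 (le_abs_self _))
    have h4 : 2 * η / D ^ s ≤ ε := by rw [div_le_iff₀ hDs]; linarith
    have h5 : (2 - 2 * η) / D ^ s ≤ (u x - u y) / D ^ s :=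
      (div_le_div_iff_of_pos_right hDs).2 (by linarith)
    have h6 : (2 - 2 * η) / D ^ s = 2 / D ^ s - 2 * η / D ^ s := by ring
    have h7 : |u x - u y| / d x y ^ s ≤ sSup {r : ℝ | ∃ x y : EuclideanSpace ℝ (Fin n),
        (x ∈ U ∨ y ∈ U) ∧ x ≠ y ∧ r = |u x - u y| / d x y ^ s} := le_csSup hTbdd hmem
    linarith
  have hMemA : MemA n d s U u := ⟨hbddA, hTbdd, hnz, by rw [hsupu, hinfu]; ring⟩
  have hratio : HsInfty n d s U u / supNormOn U u = 2 / D ^ s := by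
    rw [hHs, hsupN, div_one]
  -- lower bound for general admissible v
  have hlow : ∀ v : EuclideanSpace ℝ (Fin n) → ℝ, MemA n d s U v →
      2 / D ^ s ≤ HsInfty n d s U v / supNormOn U v := by
    intro v hv
    obtain ⟨hb1, hb2, hnz', hsi⟩ := hv
    obtain ⟨M, hM⟩ := hb1
    have hMub : ∀ x ∈ U, |v x| ≤ M := fun x hx => hM ⟨x, hx, rfl⟩
    have hbddab : BddAbove (v '' U) :=
      ⟨M, by rintro r ⟨x, hx, rfl⟩; exact le_trans (le_abs_self _) (hMub x hx)⟩
    have hbddbe : BddBelow (v '' U) :=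
      ⟨-M, by rintro r ⟨x, hx, rfl⟩; exact le_trans (neg_le_neg (hMub x hx)) (neg_abs_le _)⟩
    set A : ℝ := sSup (v '' U) with hA
    have hIA : sInf (v '' U) = -A := by linarith
    have hle : ∀ x ∈ U, v x ≤ A := fun x hx => le_csSup hbddab ⟨x, hx, rfl⟩
    have hge : ∀ x ∈ U, -A ≤ v x := fun x hx => hIA ▸ csInf_le hbddbe ⟨x, hx, rfl⟩
    have hApos : 0 < A := by
      rcases lt_or_ge 0 A with h | h
      · exact h
      · exfalso
        apply hnz'
        intro x hx
        have h1 := hle x hx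
        have h2 := hge x hx
        have : 0 ≤ A := by linarith
        have : A = 0 := le_antisymm h this
        rw [this] at h1 h2
        linarith
    have hsupNv : supNormOn U v = A := by
      rw [supNormOn]
      refine le_antisymm (csSup_le (hUne.image _) ?_) ?_
      · rintro r ⟨x, hx, rfl⟩
        exact abs_le.2 ⟨hge x hx, hle x hx⟩
      · refine le_of_forall_pos_le_add ?_
        intro ε hε
        obtain ⟨r, ⟨x, hx, rfl⟩, hr⟩ :=
          exists_lt_of_lt_csSup (hUne.image v) (show A - ε < sSup (v '' U) by rw [← hA]; linarith)
        have h2 : |v x| ≤ sSup ((fun x => |v x|) '' U) := le_csSup ⟨M, hM⟩ ⟨x, hx, rfl⟩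
        have h1 : v x ≤ |v x| := le_abs_self _
        linarith
    have hHv : 2 / D ^ s * A ≤ HsInfty n d s U v := by
      rw [HsInfty]
      refine le_of_forall_pos_le_add ?_
      intro ε hε
      set η : ℝ := min (A / 2) (ε * D ^ s / 2) with hηdef
      have hη : 0 < η := lt_min (by linarith) (by positivity)
      have hη2 : η ≤ A / 2 := min_le_left _ _
      have hη3 : η ≤ ε * D ^ s / 2 := min_le_right _ _
      obtain ⟨r, ⟨x, hxU, rfl⟩, hr⟩ :=
        exists_lt_of_lt_csSup (hUne.image v) (show A - η < sSup (v '' U) by rw [← hA]; linarith)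
      obtain ⟨r, ⟨y, hyU, rfl⟩, hry⟩ :=
        exists_lt_of_csInf_lt (hUne.image v) (show sInf (v '' U) < -A + η by rw [hIA]; linarith)
      have huxy : v y < v x := by linarith
      have hne : x ≠ y := fun h => by rw [h] at huxy; exact lt_irrefl _ huxy
      have hdp : 0 < d x y ^ s := Real.rpow_pos_of_pos (hdpos x y hne) s
      have hdle : d x y ^ s ≤ D ^ s :=
        Real.rpow_le_rpow (hd0 _ _) (hdleD x (subset_closure hxU) y (subset_closure hyU)) hs0.le
      have hmem : |v x - v y| / d x y ^ s ∈ {r : ℝ | ∃ x y : EuclideanSpace ℝ (Fin n),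
          (x ∈ U ∨ y ∈ U) ∧ x ≠ y ∧ r = |v x - v y| / d x y ^ s} :=
        ⟨x, y, Or.inl hxU, hne, rfl⟩
      have h1 : (v x - v y) / D ^ s ≤ |v x - v y| / d x y ^ s :=
        le_trans (div_le_div_of_nonneg_left (by linarith) hdp hdle)
          ((div_le_div_iff_of_pos_right hdp).2 (le_abs_self _))
      have h4 : 2 * η / D ^ s ≤ ε := by rw [div_le_iff₀ hDs]; linarith
      have h5 : (2 * A - 2 * η) / D ^ s ≤ (v x - v y) / D ^ s :=
        (div_le_div_iff_of_pos_right hDs).2 (by linarith)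
      have h6 : (2 * A - 2 * η) / D ^ s = 2 / D ^ s * A - 2 * η / D ^ s := by ring
      have h7 : |v x - v y| / d x y ^ s ≤ sSup {r : ℝ | ∃ x y : EuclideanSpace ℝ (Fin n),
          (x ∈ U ∨ y ∈ U) ∧ x ≠ y ∧ r = |v x - v y| / d x y ^ s} := le_csSup hb2 hmem
      linarith
    rw [hsupNv, le_div_iff₀ hApos]
    exact hHv
  -- assemble
  refine ⟨?_, hMemA, hratio⟩
  have hmemS : (2 : ℝ) / D ^ s ∈ {r : ℝ | ∃ u : EuclideanSpace ℝ (Fin n) → ℝ,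
      MemA n d s U u ∧ r = HsInfty n d s U u / supNormOn U u} :=
    ⟨u, hMemA, hratio.symm⟩
  have hlb : ∀ r ∈ {r : ℝ | ∃ u : EuclideanSpace ℝ (Fin n) → ℝ,
      MemA n d s U u ∧ r = HsInfty n d s U u / supNormOn U u}, 2 / D ^ s ≤ r := by
    rintro r ⟨v, hv, rfl⟩
    exact hlow v hv
  exact le_antisymm (csInf_le ⟨2 / D ^ s, hlb⟩ hmemS) (le_csInf ⟨_, hmemS⟩ hlb)
end
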